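/- arXiv:2006.16330 — 3 statements merged into one kernel-verified Lean document; each statement's English description precedes it below -/
import Mathlib

section
/- Let B be a weak Hopf *-algebra, A a unital *-algebra with a right coaction 𝔞 of B (a *-homomorphism 𝔞 : A → A ⊗ B with (𝔞⊗id)𝔞 = (id⊗Δ)𝔞, (id⊗ε)𝔞 = id_A and 𝔞(1_A) ∈ A ⊗ B_t), and let ◁ : A ⊗ B → A make A a right B-module algebra (a ◁ 1 = a, (ac) ◁ b = (a ◁ b₍₁₎)(c ◁ b₍₂₎), a* ◁ b = (a ◁ S(b)*)*, 1 ◁ b = 1 ◁ ε_s(b)). Assume the braided-commutativity relation a b = b^{(1)} (a ◁ b^{(2)}) holds for all a, b ∈ A (writing 𝔞(b) = b^{(1)} ⊗ b^{(2)}). Then the fixed point algebra A^𝔞 := { a ∈ A : 𝔞(a) = 𝔞(1_A)(a ⊗ 1) } is contained in the center of A. -/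
open scoped TensorProduct
open TensorProduct

noncomputable section

/-- The conjugate-linear "star" operation on a tensor product of two star modules,
defined via a choice of bases so that `star (x ⊗ y) = star x ⊗ star y`. -/
def tensorStar (M N : Type) [AddCommGroup M] [Module ℂ M] [Module.Finite ℂ M]
    [Module.Free ℂ M] [StarAddMonoid M] [AddCommGroup N] [Module ℂ N] [Module.Finite ℂ N]
    [Module.Free ℂ N] [StarAddMonoid N] (t : M ⊗[ℂ] N) : M ⊗[ℂ] N :=
  let bM := Module.Free.chooseBasis ℂ M
  let bN := Module.Free.chooseBasis ℂ N
  ∑ p : Module.Free.ChooseBasisIndex ℂ M × Module.Free.ChooseBasisIndex ℂ N,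
    (starRingEnd ℂ) (((bM.tensorProduct bN).repr t) p) • (star (bM p.1) ⊗ₜ[ℂ] star (bN p.2))

/-- A weak Hopf `*`-algebra structure on a finite-dimensional `C*`-algebra `B`. -/
structure WHA (B : Type) [NormedRing B] [StarRing B] [CStarRing B] [NormedAlgebra ℂ B]
    [StarModule ℂ B] [FiniteDimensional ℂ B] where
  Δ : B →ₗ[ℂ] B ⊗[ℂ] B
  ε : B →ₗ[ℂ] ℂ
  S : B →ₗ[ℂ] B
  coassoc : ∀ b : B, (TensorProduct.assoc ℂ B B B) ((TensorProduct.map Δ LinearMap.id) (Δ b)) =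
    (TensorProduct.map LinearMap.id Δ) (Δ b)
  counit_left : ∀ b : B, (TensorProduct.lid ℂ B) ((TensorProduct.map ε LinearMap.id) (Δ b)) = b
  counit_right : ∀ b : B, (TensorProduct.rid ℂ B) ((TensorProduct.map LinearMap.id ε) (Δ b)) = b
  comul_mul : ∀ a b : B, Δ (a * b) = Δ a * Δ b
  weak_counit : ∀ b c d : B, (TensorProduct.lid ℂ ℂ)
      ((TensorProduct.map (ε ∘ₗ LinearMap.mulLeft ℂ b) (ε ∘ₗ LinearMap.mulRight ℂ d)) (Δ c)) =
    ε (b * c * d)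
  weak_comul_one : (TensorProduct.map Δ LinearMap.id) (Δ 1) =
    (Δ 1 ⊗ₜ[ℂ] (1 : B)) * ((TensorProduct.assoc ℂ B B B).symm ((1 : B) ⊗ₜ[ℂ] Δ 1))
  comul_star : ∀ b : B, Δ (star b) = tensorStar B B (Δ b)
  antipode_mul : ∀ a b : B, S (a * b) = S b * S a
  antipode_one : S 1 = 1
  antipode_comul : ∀ b : B, Δ (S b) =
    (TensorProduct.map S S) ((TensorProduct.comm ℂ B B) (Δ b))
  counit_antipode : ∀ b : B, ε (S b) = ε b
  antipode_left : ∀ b : B, LinearMap.mul' ℂ B ((TensorProduct.map LinearMap.id S) (Δ b)) =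
    (TensorProduct.lid ℂ B) ((TensorProduct.map ε LinearMap.id) (Δ 1 * (b ⊗ₜ[ℂ] (1 : B))))
  antipode_right : ∀ b : B, LinearMap.mul' ℂ B ((TensorProduct.map S LinearMap.id) (Δ b)) =
    (TensorProduct.rid ℂ B) ((TensorProduct.map LinearMap.id ε) (((1 : B) ⊗ₜ[ℂ] b) * Δ 1))

namespace WHA

variable {B : Type} [NormedRing B] [StarRing B] [CStarRing B] [NormedAlgebra ℂ B]
  [StarModule ℂ B] [FiniteDimensional ℂ B]

/-- The target counital map `ε_t(b) = (ε ⊗ id)(Δ(1)(b ⊗ 1))`. -/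
def εt (W : WHA B) (b : B) : B :=
  (TensorProduct.lid ℂ B) ((TensorProduct.map W.ε LinearMap.id) (W.Δ 1 * (b ⊗ₜ[ℂ] (1 : B))))

/-- The source counital map `ε_s(b) = (id ⊗ ε)((1 ⊗ b)Δ(1))`. -/
def εs (W : WHA B) (b : B) : B :=
  (TensorProduct.rid ℂ B) ((TensorProduct.map LinearMap.id W.ε) (((1 : B) ⊗ₜ[ℂ] b) * W.Δ 1))

/-- The target counital subalgebra `B_t = ε_t(B)`. -/
def Bt (W : WHA B) : Submodule ℂ B := Submodule.span ℂ (Set.range W.εt)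

/-- The source counital subalgebra `B_s = ε_s(B)`. -/
def Bs (W : WHA B) : Submodule ℂ B := Submodule.span ℂ (Set.range W.εs)

/-- The right adjoint action `b ◁ x = S(x₍₁₎) b x₍₂₎`. -/
def ad (W : WHA B) (b x : B) : B :=
  LinearMap.mul' ℂ B ((TensorProduct.map W.S (LinearMap.mulLeft ℂ b)) (W.Δ x))

/-- `I` is a (right) coideal of `B`: a unital `*`-subalgebra with `Δ(I) ⊆ I ⊗ B`. -/
def IsCoideal (W : WHA B) (I : Submodule ℂ B) : Prop :=
  (1 : B) ∈ I ∧ (∀ a ∈ I, ∀ b ∈ I, a * b ∈ I) ∧ (∀ a ∈ I, star a ∈ I) ∧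
    ∀ a ∈ I, W.Δ a ∈ Submodule.span ℂ {x : B ⊗[ℂ] B | ∃ u ∈ I, ∃ v : B, x = u ⊗ₜ[ℂ] v}

/-- A coideal is invariant if `span{ b ◁ x : b ∈ I, x ∈ B } = I`. -/
def IsInvariant (W : WHA B) (I : Submodule ℂ B) : Prop :=
  Submodule.span ℂ {y : B | ∃ b ∈ I, ∃ x : B, y = W.ad b x} = I

end WHA

/-- A morphism of weak Hopf `*`-algebras. -/
structure WHAHom {B C : Type} [NormedRing B] [StarRing B] [CStarRing B] [NormedAlgebra ℂ B]
    [StarModule ℂ B] [FiniteDimensional ℂ B] [NormedRing C] [StarRing C] [CStarRing C]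
    [NormedAlgebra ℂ C] [StarModule ℂ C] [FiniteDimensional ℂ C]
    (W : WHA B) (W' : WHA C) where
  π : B →⋆ₐ[ℂ] C
  comul_comp : ∀ b : B, W'.Δ (π b) = (TensorProduct.map π.toLinearMap π.toLinearMap) (W.Δ b)
  antipode_comp : ∀ b : B, W'.S (π b) = π (W.S b)
  counit_comp : ∀ b : B, W'.ε (π b) = W.ε b



section AuxLemmas

variable {A B : Type} [Ring A] [Algebra ℂ A] [Ring B] [Algebra ℂ B]

lemma aux_mul_tmul_right (f : B →ₗ[ℂ] ℂ) (a : A) (t : A ⊗[ℂ] B) :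
    (TensorProduct.rid ℂ A) ((TensorProduct.map LinearMap.id f) (t * (a ⊗ₜ[ℂ] (1 : B)))) =
      (TensorProduct.rid ℂ A) ((TensorProduct.map LinearMap.id f) t) * a := by
  induction t using TensorProduct.induction_on with
  | zero => simp
  | tmul x y => simp [Algebra.TensorProduct.tmul_mul_tmul, smul_mul_assoc]
  | add s t hs ht => simp [add_mul, hs, ht]

lemma aux_mul'_tmul_left (f : B →ₗ[ℂ] A) (y : A) (t : A ⊗[ℂ] B) :
    LinearMap.mul' ℂ A ((TensorProduct.map LinearMap.id f) ((y ⊗ₜ[ℂ] (1 : B)) * t)) =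
      y * LinearMap.mul' ℂ A ((TensorProduct.map LinearMap.id f) t) := by
  induction t using TensorProduct.induction_on with
  | zero => simp
  | tmul x b => simp [Algebra.TensorProduct.tmul_mul_tmul, mul_assoc]
  | add s t hs ht => simp [mul_add, hs, ht]

end AuxLemmas

/-- for a braided-commutative coaction, the fixed point algebra is central. -/
theorem fixed_points_central {B : Type} [NormedRing B] [StarRing B] [CStarRing B]
    [NormedAlgebra ℂ B] [StarModule ℂ B] [FiniteDimensional ℂ B] (W : WHA B)
    (A : Type) [Ring A] [Algebra ℂ A] [StarRing A] [StarModule ℂ A]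
    (ρ : A →ₗ[ℂ] A ⊗[ℂ] B) (act : A →ₗ[ℂ] B →ₗ[ℂ] A)
    -- `ρ` is multiplicative and `*`-preserving (a `*`-homomorphism)
    (hmul : ∀ x y : A, ρ (x * y) = ρ x * ρ y)
    (hstar : ∀ a : A, ρ (star a) =
      ∑ i : Module.Free.ChooseBasisIndex ℂ B,
        (star ((TensorProduct.rid ℂ A)
          ((TensorProduct.map LinearMap.id ((Module.Free.chooseBasis ℂ B).coord i)) (ρ a)))) ⊗ₜ[ℂ]
        star (Module.Free.chooseBasis ℂ B i))
    -- coaction axioms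
    (hcoassoc : ∀ a : A, (TensorProduct.assoc ℂ A B B)
        ((TensorProduct.map ρ LinearMap.id) (ρ a)) = (TensorProduct.map LinearMap.id W.Δ) (ρ a))
    (hcounit : ∀ a : A, (TensorProduct.rid ℂ A) ((TensorProduct.map LinearMap.id W.ε) (ρ a)) = a)
    (hone : ρ 1 ∈ Submodule.span ℂ {x : A ⊗[ℂ] B | ∃ u : A, ∃ v ∈ W.Bt, x = u ⊗ₜ[ℂ] v})
    -- `◁` makes `A` a right `B`-module algebra
    (hact_one : ∀ a : A, act a 1 = a)
    (hact_mul : ∀ a c : A, ∀ b : B, act (a * c) b =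
      ∑ i : Module.Free.ChooseBasisIndex ℂ B, ∑ j : Module.Free.ChooseBasisIndex ℂ B,
        (((Module.Free.chooseBasis ℂ B).tensorProduct
            (Module.Free.chooseBasis ℂ B)).repr (W.Δ b)) (i, j) •
          (act a (Module.Free.chooseBasis ℂ B i) * act c (Module.Free.chooseBasis ℂ B j)))
    (hact_star : ∀ (a : A) (b : B), act (star a) b = star (act a (star (W.S b))))
    (hact_unit : ∀ b : B, act 1 b = act 1 (W.εs b))
    -- braided commutativity: `a b = b⁽¹⁾ (a ◁ b⁽²⁾)`
    (hbc : ∀ a b : A, a * b =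
      LinearMap.mul' ℂ A ((TensorProduct.map LinearMap.id (act a)) (ρ b))) :
    ∀ a : A, ρ a = ρ 1 * (a ⊗ₜ[ℂ] (1 : B)) → ∀ c : A, a * c = c * a := by
  intro a ha c
  have h1 : ∀ i, (TensorProduct.rid ℂ A)
      ((TensorProduct.map LinearMap.id ((Module.Free.chooseBasis ℂ B).coord i)) (ρ a)) =
      (TensorProduct.rid ℂ A)
      ((TensorProduct.map LinearMap.id ((Module.Free.chooseBasis ℂ B).coord i)) (ρ 1)) * a := by
    intro i
    rw [ha]
    exact aux_mul_tmul_right _ a (ρ 1)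
  have hρ1 : ρ (1 : A) = ∑ i : Module.Free.ChooseBasisIndex ℂ B,
      (star ((TensorProduct.rid ℂ A)
        ((TensorProduct.map LinearMap.id ((Module.Free.chooseBasis ℂ B).coord i)) (ρ 1)))) ⊗ₜ[ℂ]
      star (Module.Free.chooseBasis ℂ B i) := by
    have := hstar (1 : A)
    rwa [star_one] at this
  have key : ρ (star a) = (star a ⊗ₜ[ℂ] (1 : B)) * ρ 1 := by
    rw [hstar a]
    conv_rhs => rw [hρ1]
    rw [Finset.mul_sum]
    refine Finset.sum_congr rfl fun i _ => ?_
    rw [h1 i, star_mul, Algebra.TensorProduct.tmul_mul_tmul, one_mul]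
  have h2 : ∀ d : A, d * star a = star a * d := by
    intro d
    rw [hbc d (star a), key, aux_mul'_tmul_left, ← hbc d 1, mul_one]
  have h3 := h2 (star c)
  calc a * c = star (star c * star a) := by rw [star_mul, star_star, star_star]
    _ = star (star a * star c) := by rw [h3]
    _ = c * a := by rw [star_mul, star_star, star_star]


end
end

section
/- Let (B_L, Δ_L, S_L, ε_L) be the weak Hopf *-algebra attached to a subgroup L of a finite abelian group G as above, with Ω = G ⊔ {m}. Set e(L)^g := Σ_{l∈L} e^l_{g+l,g+l}, e(L)_g := Σ_{l∈L} e^l_{g,g} (g ∈ G), and e(L)^m := e(L)_m := Σ_{l∈L} e^l_{m,m}. Then: (i) the counital maps are ε_t^{B_L}(e^l_{x,y}) = δ_{l,0} e(L)^x and ε_s^{B_L}(e^l_{x,y}) = δ_{l,0} e(L)_y; (ii) {e(L)^α : α ∈ Ω} is a linear basis of (B_L)_t and {e(L)_α : α ∈ Ω} is a linear basis of (B_L)_s; (iii) {z_β : β ∈ G/L ⊔ {m}} with z_β := Σ_{l∈L, g∈β} e^l_{g,g} for β ∈ G/L and z_m := Σ_{l∈L} e^l_{m,m} is a linear basis of (B_L)_s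 ∩ (B_L)_t; (iv) (B_L)_s ∩ Z(B_L) = ℂ·1, while (B_L)_s ∩ (B_L)_t ≠ ℂ·1, i.e. B_L is connected and not coconnected. -/
open scoped TensorProduct
open TensorProduct

noncomputable section

open scoped Matrix.Norms.L2Operator

section BL

variable (G : Type) [AddCommGroup G] [Fintype G] [DecidableEq G]
  (L : AddSubgroup G) [DecidablePred (· ∈ L)]

/-- The underlying algebra `B_L = ⊕_{l ∈ L} End(H^l)` (each `H^l` has orthonormal basis
indexed by `Ω = G ⊔ {m}`). -/
abbrev BL := ↥L → Matrix (G ⊕ Unit) (G ⊕ Unit) ℂ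

/-- The matrix units `e^l_{x,y}` of `B_L`. -/
def matUnit (l : L) (x y : G ⊕ Unit) : BL G L :=
  fun l' => if l' = l then Matrix.single x y 1 else 0

/-- The canonical basis of `B_L`. -/
noncomputable def basL : Module.Basis (Σ _ : L, (G ⊕ Unit) × (G ⊕ Unit)) ℂ (BL G L) :=
  Pi.basis fun _ => Matrix.stdBasis ℂ (G ⊕ Unit) (G ⊕ Unit)

/-- Translation of an index in `Ω = G ⊔ {m}` by a group element (`m` is unaffected). -/
def shiftIdx (x : G ⊕ Unit) (l : G) : G ⊕ Unit :=
  match x with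
  | Sum.inl g => Sum.inl (g - l)
  | Sum.inr u => Sum.inr u

/-- The coproduct of `B_L`:
`Δ_L(e^l_{x,y}) = Σ_{l₁+l₂=l} e^{l₁}_{x−l₂,y−l₂} ⊗ e^{l₂}_{x,y}`. -/
noncomputable def ΔL : BL G L →ₗ[ℂ] BL G L ⊗[ℂ] BL G L :=
  (basL G L).constr ℂ fun p =>
    ∑ l₁ : L, ∑ l₂ : L,
      if l₁ + l₂ = p.1 then
        (matUnit G L l₁ (shiftIdx G p.2.1 (l₂ : G)) (shiftIdx G p.2.2 (l₂ : G))) ⊗ₜ[ℂ]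
          (matUnit G L l₂ p.2.1 p.2.2)
      else 0

/-- The antipode of `B_L`: `S_L(e^l_{x,y}) = e^{−l}_{y−l,x−l}`. -/
noncomputable def SL : BL G L →ₗ[ℂ] BL G L :=
  (basL G L).constr ℂ fun p =>
    matUnit G L (-p.1) (shiftIdx G p.2.2 (p.1 : G)) (shiftIdx G p.2.1 (p.1 : G))

/-- The counit of `B_L`: `ε_L(e^l_{x,y}) = δ_{l,0}`. -/
noncomputable def εL : BL G L →ₗ[ℂ] ℂ :=
  (basL G L).constr ℂ fun p => if p.1 = 0 then (1 : ℂ) else 0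

end BL


section BL2

variable (G : Type) [AddCommGroup G] [Fintype G] [DecidableEq G]
  (L : AddSubgroup G) [DecidablePred (· ∈ L)]

/-- The target counital map of `B_L`: `ε_t(b) = (ε ⊗ id)(Δ(1)(b ⊗ 1))`. -/
noncomputable def εtBL (b : BL G L) : BL G L :=
  (TensorProduct.lid ℂ (BL G L))
    ((TensorProduct.map (εL G L) LinearMap.id) (ΔL G L 1 * (b ⊗ₜ[ℂ] (1 : BL G L))))

/-- The source counital map of `B_L`: `ε_s(b) = (id ⊗ ε)((1 ⊗ b)Δ(1))`. -/
noncomputable def εsBL (b : BL G L) : BL G L :=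
  (TensorProduct.rid ℂ (BL G L))
    ((TensorProduct.map LinearMap.id (εL G L)) (((1 : BL G L) ⊗ₜ[ℂ] b) * ΔL G L 1))

/-- `e(L)^α` for `α ∈ Ω = G ⊔ {m}`. -/
noncomputable def eTgt : (G ⊕ Unit) → BL G L := fun α =>
  match α with
  | Sum.inl g => ∑ l : L, matUnit G L l (Sum.inl (g + (l : G))) (Sum.inl (g + (l : G)))
  | Sum.inr _ => ∑ l : L, matUnit G L l (Sum.inr ()) (Sum.inr ())

/-- `e(L)_α` for `α ∈ Ω = G ⊔ {m}`. -/
noncomputable def eSrc : (G ⊕ Unit) → BL G L := fun α =>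
  match α with
  | Sum.inl g => ∑ l : L, matUnit G L l (Sum.inl g) (Sum.inl g)
  | Sum.inr _ => ∑ l : L, matUnit G L l (Sum.inr ()) (Sum.inr ())

open scoped Classical in
/-- `z_β` for `β ∈ G/L ⊔ {m}`. -/
noncomputable def zBL : ((G ⧸ L) ⊕ Unit) → BL G L := fun β =>
  match β with
  | Sum.inl q => ∑ l : L, ∑ g : G,
      if (QuotientAddGroup.mk g : G ⧸ L) = q then matUnit G L l (Sum.inl g) (Sum.inl g) else 0
  | Sum.inr _ => ∑ l : L, matUnit G L l (Sum.inr ()) (Sum.inr ())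

end BL2

set_option synthInstance.maxHeartbeats 1000000
set_option maxHeartbeats 2000000
set_option linter.unusedSectionVars false
section Lemmas
variable (G : Type) [AddCommGroup G] [Fintype G] [DecidableEq G]
  (L : AddSubgroup G) [DecidablePred (· ∈ L)]

lemma basL_eq (l : L) (x y : G ⊕ Unit) :
    basL G L ⟨l, (x, y)⟩ = matUnit G L l x y := by
  funext l'
  simp [basL, matUnit, Pi.basis_apply, Matrix.stdBasis_eq_single, Pi.single_apply]

lemma matUnit_apply (l l' : L) (x y i j : G ⊕ Unit) :
    matUnit G L l x y l' i j = if l' = l ∧ i = x ∧ j = y then 1 else 0 := by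
  rcases eq_or_ne l' l with rfl | h
  · simp only [matUnit, if_pos rfl, Matrix.single, Matrix.of_apply, true_and]
    simp [@eq_comm _ x, @eq_comm _ y]
  · simp [matUnit, h]

lemma matUnit_mul (l₁ l₂ : L) (x y z w : G ⊕ Unit) :
    matUnit G L l₁ x y * matUnit G L l₂ z w =
      if l₁ = l₂ ∧ y = z then matUnit G L l₁ x w else 0 := by
  funext l'
  ext i j
  rw [Pi.mul_apply, Matrix.mul_apply]
  by_cases h1 : l₁ = l₂ <;> by_cases h2 : y = z <;>
    simp [matUnit_apply, h1, h2, ite_and, Finset.sum_ite_eq, Finset.sum_ite_eq'] <;>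
    aesop

lemma one_def : (1 : BL G L) = ∑ l : L, ∑ x : G ⊕ Unit, matUnit G L l x x := by
  funext l'
  ext i j
  rcases i with g | ⟨⟩ <;> rcases j with h | ⟨⟩ <;>
    simp [Finset.sum_apply, Matrix.sum_apply, matUnit_apply, ite_and, Finset.sum_ite_eq,
      Finset.sum_ite_eq', Matrix.one_apply, eq_comm]

lemma ΔL_matUnit (l : L) (x y : G ⊕ Unit) :
    ΔL G L (matUnit G L l x y) = ∑ l₁ : L, ∑ l₂ : L,
      if l₁ + l₂ = l then
        (matUnit G L l₁ (shiftIdx G x (l₂ : G)) (shiftIdx G y (l₂ : G))) ⊗ₜ[ℂ]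
          (matUnit G L l₂ x y)
      else 0 := by
  rw [← basL_eq]
  exact (basL G L).constr_basis ℂ _ ⟨l, (x, y)⟩

lemma εL_matUnit (l : L) (x y : G ⊕ Unit) :
    εL G L (matUnit G L l x y) = if l = 0 then 1 else 0 := by
  rw [← basL_eq]
  exact (basL G L).constr_basis ℂ _ ⟨l, (x, y)⟩


lemma sum_ite_push {ι M : Type*} [Fintype ι] [AddCommMonoid M] (c : Prop) [Decidable c]
    (f : ι → M) : ∑ i : ι, (if c then f i else 0) = if c then ∑ i, f i else 0 := by
  split_ifs <;> simp

lemma shiftIdx_zero (x : G ⊕ Unit) : shiftIdx G x (0 : G) = x := by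
  cases x <;> simp [shiftIdx]

lemma shiftIdx_eq_iff (z x : G ⊕ Unit) (l : G) :
    shiftIdx G z l = x ↔ z = shiftIdx G x (-l) := by
  cases z <;> cases x <;>
    simp [shiftIdx, sub_eq_iff_eq_add, sub_neg_eq_add]

lemma eTgt_eq (x : G ⊕ Unit) :
    eTgt G L x = ∑ l : L, matUnit G L l (shiftIdx G x (-(l : G))) (shiftIdx G x (-(l : G))) := by
  rcases x with g | ⟨⟩ <;> simp [eTgt, shiftIdx, sub_neg_eq_add]

lemma ΔL_one : ΔL G L 1 = ∑ x : G ⊕ Unit, ∑ l₁ : L, ∑ l₂ : L,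
    (matUnit G L l₁ (shiftIdx G x (l₂ : G)) (shiftIdx G x (l₂ : G))) ⊗ₜ[ℂ]
      (matUnit G L l₂ x x) := by
  rw [one_def, map_sum]
  simp only [map_sum, ΔL_matUnit]
  rw [Finset.sum_comm]
  refine Finset.sum_congr rfl fun x _ => ?_
  rw [Finset.sum_comm]
  refine Finset.sum_congr rfl fun l₁ _ => ?_
  rw [Finset.sum_comm]
  refine Finset.sum_congr rfl fun l₂ _ => ?_
  simp [Finset.sum_ite_eq]
lemma eSrc_eq (y : G ⊕ Unit) : eSrc G L y = ∑ l : L, matUnit G L l y y := by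
  rcases y with g | ⟨⟩ <;> simp [eSrc]

lemma εtBL_matUnit (l : L) (x y : G ⊕ Unit) :
    εtBL G L (matUnit G L l x y) = if l = 0 then eTgt G L x else 0 := by
  have key : ∀ (x' : G ⊕ Unit) (l₁ l₂ : L),
      (if l₁ = l ∧ shiftIdx G x' (l₂ : G) = x then
        (if l₁ = (0 : L) then matUnit G L l₂ x' x' else 0) else 0)
      = if l₁ = l then (if x' = shiftIdx G x (-(l₂ : G)) then
          (if l = 0 then matUnit G L l₂ x' x' else 0) else 0) else 0 := by
    intro x' l₁ l₂
    by_cases h1 : l₁ = l <;> by_cases h2 : shiftIdx G x' (l₂ : G) = x <;>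
      simp [h1, h2, ← shiftIdx_eq_iff]
  simp only [εtBL, ΔL_one, Finset.sum_mul, Algebra.TensorProduct.tmul_mul_tmul, mul_one,
    matUnit_mul, TensorProduct.ite_tmul, map_sum,
    apply_ite (TensorProduct.map (εL G L) LinearMap.id), map_zero,
    TensorProduct.map_tmul, LinearMap.id_coe, id_eq, εL_matUnit,
    apply_ite (TensorProduct.lid ℂ (BL G L)), TensorProduct.lid_tmul, ite_smul, zero_smul,
    one_smul, key, sum_ite_push, Finset.sum_ite_eq']
  rw [Finset.sum_comm]
  simp only [Finset.sum_ite_eq', Finset.mem_univ, if_pos, sum_ite_push]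
  rw [← eTgt_eq]

lemma εsBL_matUnit (l : L) (x y : G ⊕ Unit) :
    εsBL G L (matUnit G L l x y) = if l = 0 then eSrc G L y else 0 := by
  have key : ∀ (x' : G ⊕ Unit) (l₁ l₂ : L),
      (if l = l₂ ∧ y = x' then
        (if l = (0 : L) then matUnit G L l₁ (shiftIdx G x' (l₂ : G)) (shiftIdx G x' (l₂ : G))
          else 0) else 0)
      = if x' = y then (if l₂ = l then
          (if l = 0 then matUnit G L l₁ (shiftIdx G x' (l₂ : G)) (shiftIdx G x' (l₂ : G))
            else 0) else 0) else 0 := by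
    intro x' l₁ l₂
    by_cases h1 : x' = y <;> by_cases h2 : l₂ = l <;>
      simp [h1, h2, @eq_comm _ l, @eq_comm _ y]
  simp only [εsBL, ΔL_one, Finset.mul_sum, Algebra.TensorProduct.tmul_mul_tmul, one_mul,
    matUnit_mul, TensorProduct.tmul_ite, map_sum,
    apply_ite (TensorProduct.map LinearMap.id (εL G L)), map_zero,
    TensorProduct.map_tmul, LinearMap.id_coe, id_eq, εL_matUnit,
    apply_ite (TensorProduct.rid ℂ (BL G L)), TensorProduct.rid_tmul, ite_smul, zero_smul,
    one_smul, key, sum_ite_push, Finset.sum_ite_eq']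
  rcases eq_or_ne l 0 with rfl | hl
  · rw [if_pos rfl, if_pos rfl, eSrc_eq]
    simp [shiftIdx_zero]
  · simp [hl]
lemma eSrc_apply (α : G ⊕ Unit) (l : L) (i j : G ⊕ Unit) :
    eSrc G L α l i j = if i = α ∧ j = α then 1 else 0 := by
  simp [eSrc_eq, Finset.sum_apply, Matrix.sum_apply, matUnit_apply, ite_and, Finset.sum_ite_eq]

lemma eTgt_apply (α : G ⊕ Unit) (l : L) (i j : G ⊕ Unit) :
    eTgt G L α l i j =
      if i = shiftIdx G α (-(l : G)) ∧ j = shiftIdx G α (-(l : G)) then 1 else 0 := by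
  simp [eTgt_eq, Finset.sum_apply, Matrix.sum_apply, matUnit_apply, ite_and, Finset.sum_ite_eq]

lemma matrix_ite_apply (c : Prop) [Decidable c] (A : Matrix (G ⊕ Unit) (G ⊕ Unit) ℂ)
    (i j : G ⊕ Unit) : (if c then A else 0) i j = if c then A i j else 0 := by
  split_ifs <;> simp

open scoped Classical in
lemma zBL_inl_eq (q : G ⧸ L) : zBL G L (Sum.inl q) =
    ∑ g : G, if (QuotientAddGroup.mk g : G ⧸ L) = q then eSrc G L (Sum.inl g) else 0 := by
  simp only [zBL]
  rw [Finset.sum_comm]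
  refine Finset.sum_congr rfl fun g _ => ?_
  rw [sum_ite_push, eSrc_eq]

lemma zBL_inr_eq (u : Unit) : zBL G L (Sum.inr u) = eSrc G L (Sum.inr ()) := by
  simp [zBL, eSrc]

open scoped Classical in
lemma zBL_inl_apply (q : G ⧸ L) (l : L) (h h' : G) :
    zBL G L (Sum.inl q) l (Sum.inl h) (Sum.inl h') =
      if h' = h ∧ (QuotientAddGroup.mk h : G ⧸ L) = q then 1 else 0 := by
  rw [zBL_inl_eq]
  simp only [Finset.sum_apply, Matrix.sum_apply, ite_apply, Pi.zero_apply, Matrix.zero_apply,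
    matrix_ite_apply, eSrc_apply]
  rw [Finset.sum_eq_single h]
  · by_cases h1 : h' = h <;> by_cases h2 : (QuotientAddGroup.mk h : G ⧸ L) = q <;>
      simp [h1, h2]
  · intro g _ hg
    simp [Ne.symm hg]
  · simp

open scoped Classical in
lemma zBL_inl_apply_inr_right (q : G ⧸ L) (l : L) (i : G ⊕ Unit) (u : Unit) :
    zBL G L (Sum.inl q) l i (Sum.inr u) = 0 := by
  rw [zBL_inl_eq]
  simp [Finset.sum_apply, Matrix.sum_apply, ite_apply, Pi.zero_apply, Matrix.zero_apply,
    matrix_ite_apply, eSrc_apply]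

open scoped Classical in
lemma zBL_inl_apply_inr_left (q : G ⧸ L) (l : L) (j : G ⊕ Unit) (u : Unit) :
    zBL G L (Sum.inl q) l (Sum.inr u) j = 0 := by
  rw [zBL_inl_eq]
  simp [Finset.sum_apply, Matrix.sum_apply, ite_apply, Pi.zero_apply, Matrix.zero_apply,
    matrix_ite_apply, eSrc_apply]

lemma one_eq_sum_eSrc : (1 : BL G L) = ∑ α : G ⊕ Unit, eSrc G L α := by
  funext l
  ext i j
  simp only [Finset.sum_apply, Matrix.sum_apply, eSrc_apply, Pi.one_apply, Matrix.one_apply,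
    ite_and, Finset.sum_ite_eq]
  simp [eq_comm]
noncomputable def εtHom : BL G L →ₗ[ℂ] BL G L :=
  (TensorProduct.lid ℂ (BL G L)).toLinearMap ∘ₗ (TensorProduct.map (εL G L) LinearMap.id) ∘ₗ
    (LinearMap.mulLeft ℂ (ΔL G L 1)) ∘ₗ ((TensorProduct.mk ℂ (BL G L) (BL G L)).flip 1)

lemma εtHom_apply (b : BL G L) : εtHom G L b = εtBL G L b := rfl

noncomputable def εsHom : BL G L →ₗ[ℂ] BL G L :=
  (TensorProduct.rid ℂ (BL G L)).toLinearMap ∘ₗ (TensorProduct.map LinearMap.id (εL G L)) ∘ₗ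
    (LinearMap.mulRight ℂ (ΔL G L 1)) ∘ₗ (TensorProduct.mk ℂ (BL G L) (BL G L) 1)

lemma εsHom_apply (b : BL G L) : εsHom G L b = εsBL G L b := rfl

lemma span_eTgt_eq : Submodule.span ℂ (Set.range (eTgt G L)) =
    Submodule.span ℂ (Set.range (εtBL G L)) := by
  apply le_antisymm
  · rw [Submodule.span_le]
    rintro _ ⟨x, rfl⟩
    have : eTgt G L x = εtBL G L (matUnit G L 0 x x) := by simp [εtBL_matUnit]
    rw [this]
    exact Submodule.subset_span ⟨_, rfl⟩
  · rw [Submodule.span_le]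
    rintro _ ⟨b, rfl⟩
    rw [← εtHom_apply]
    have hb : b ∈ Submodule.span ℂ (Set.range (basL G L)) := by
      rw [Module.Basis.span_eq]; trivial
    refine Submodule.span_induction
      (p := fun b _ => εtHom G L b ∈ Submodule.span ℂ (Set.range (eTgt G L)))
      ?_ ?_ ?_ ?_ hb
    · rintro _ ⟨⟨l, x, y⟩, rfl⟩
      rw [basL_eq, εtHom_apply, εtBL_matUnit]
      split_ifs
      · exact Submodule.subset_span ⟨x, rfl⟩
      · exact Submodule.zero_mem _
    · simp
    · intro u v _ _ hu hv; rw [map_add]; exact Submodule.add_mem _ hu hv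
    · intro a u _ hu; rw [map_smul]; exact Submodule.smul_mem _ a hu

lemma span_eSrc_eq : Submodule.span ℂ (Set.range (eSrc G L)) =
    Submodule.span ℂ (Set.range (εsBL G L)) := by
  apply le_antisymm
  · rw [Submodule.span_le]
    rintro _ ⟨y, rfl⟩
    have : eSrc G L y = εsBL G L (matUnit G L 0 y y) := by simp [εsBL_matUnit]
    rw [this]
    exact Submodule.subset_span ⟨_, rfl⟩
  · rw [Submodule.span_le]
    rintro _ ⟨b, rfl⟩
    rw [← εsHom_apply]
    have hb : b ∈ Submodule.span ℂ (Set.range (basL G L)) := by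
      rw [Module.Basis.span_eq]; trivial
    refine Submodule.span_induction
      (p := fun b _ => εsHom G L b ∈ Submodule.span ℂ (Set.range (eSrc G L)))
      ?_ ?_ ?_ ?_ hb
    · rintro _ ⟨⟨l, x, y⟩, rfl⟩
      rw [basL_eq, εsHom_apply, εsBL_matUnit]
      split_ifs
      · exact Submodule.subset_span ⟨y, rfl⟩
      · exact Submodule.zero_mem _
    · simp
    · intro u v _ _ hu hv; rw [map_add]; exact Submodule.add_mem _ hu hv
    · intro a u _ hu; rw [map_smul]; exact Submodule.smul_mem _ a hu

lemma eTgt_li : LinearIndependent ℂ (eTgt G L) := by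
  rw [Fintype.linearIndependent_iff]
  intro c hc α
  have h := congrFun (congrFun (congrFun hc 0) α) α
  simpa [Finset.sum_apply, Matrix.sum_apply, Pi.smul_apply, Matrix.smul_apply, eTgt_apply,
    shiftIdx_zero, smul_eq_mul, mul_ite, mul_one, mul_zero, Finset.sum_ite_eq] using h

lemma eSrc_li : LinearIndependent ℂ (eSrc G L) := by
  rw [Fintype.linearIndependent_iff]
  intro c hc α
  have h := congrFun (congrFun (congrFun hc 0) α) α
  simpa [Finset.sum_apply, Matrix.sum_apply, Pi.smul_apply, Matrix.smul_apply, eSrc_apply,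
    smul_eq_mul, mul_ite, mul_one, mul_zero, Finset.sum_ite_eq] using h

lemma zBL_li : LinearIndependent ℂ (zBL G L) := by
  classical
  rw [Fintype.linearIndependent_iff]
  intro c hc β
  rcases β with q | ⟨⟩
  · have h := congrFun (congrFun (congrFun hc 0) (Sum.inl q.out)) (Sum.inl q.out)
    simpa [Finset.sum_apply, Matrix.sum_apply, Pi.smul_apply, Matrix.smul_apply,
      Fintype.sum_sum_type, zBL_inl_apply, zBL_inr_eq, eSrc_apply,
      QuotientAddGroup.out_eq', smul_eq_mul, mul_ite, mul_one, mul_zero,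
      Finset.sum_ite_eq] using h
  · have h := congrFun (congrFun (congrFun hc 0) (Sum.inr ())) (Sum.inr ())
    simpa [Finset.sum_apply, Matrix.sum_apply, Pi.smul_apply, Matrix.smul_apply,
      Fintype.sum_sum_type, zBL_inl_apply_inr_right, zBL_inr_eq, eSrc_apply,
      smul_eq_mul] using h
open scoped Classical in
lemma zBL_inl_eq_tgt (q : G ⧸ L) : zBL G L (Sum.inl q) =
    ∑ g : G, if (QuotientAddGroup.mk g : G ⧸ L) = q then eTgt G L (Sum.inl g) else 0 := by
  rw [zBL_inl_eq]
  have h1 : ∀ g : G, (if (QuotientAddGroup.mk g : G ⧸ L) = q then eSrc G L (Sum.inl g) else 0)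
      = ∑ l : L, (if (QuotientAddGroup.mk g : G ⧸ L) = q
          then matUnit G L l (Sum.inl g) (Sum.inl g) else 0) := by
    intro g; rw [sum_ite_push, eSrc_eq]
  have h2 : ∀ g : G, (if (QuotientAddGroup.mk g : G ⧸ L) = q then eTgt G L (Sum.inl g) else 0)
      = ∑ l : L, (if (QuotientAddGroup.mk g : G ⧸ L) = q
          then matUnit G L l (Sum.inl (g + l)) (Sum.inl (g + l)) else 0) := by
    intro g; rw [sum_ite_push]; simp [eTgt]
  simp only [h1, h2]
  rw [Finset.sum_comm]
  conv_rhs => rw [Finset.sum_comm]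
  refine Finset.sum_congr rfl fun l _ => ?_
  refine (Fintype.sum_equiv (Equiv.addRight (l : G)) _ _ fun g => ?_).symm
  simp only [Equiv.coe_addRight]
  simp only [QuotientAddGroup.mk_add_of_mem g l.2]

lemma zBL_inr_eq_tgt (u : Unit) : zBL G L (Sum.inr u) = eTgt G L (Sum.inr ()) := by
  simp [zBL, eTgt]

lemma zBL_mem_src (β : (G ⧸ L) ⊕ Unit) :
    zBL G L β ∈ Submodule.span ℂ (Set.range (eSrc G L)) := by
  classical
  rcases β with q | ⟨⟩
  · rw [zBL_inl_eq]
    refine Submodule.sum_mem _ fun g _ => ?_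
    split_ifs
    · exact Submodule.subset_span ⟨_, rfl⟩
    · exact Submodule.zero_mem _
  · rw [zBL_inr_eq]
    exact Submodule.subset_span ⟨_, rfl⟩

lemma zBL_mem_tgt (β : (G ⧸ L) ⊕ Unit) :
    zBL G L β ∈ Submodule.span ℂ (Set.range (eTgt G L)) := by
  classical
  rcases β with q | ⟨⟩
  · rw [zBL_inl_eq_tgt]
    refine Submodule.sum_mem _ fun g _ => ?_
    split_ifs
    · exact Submodule.subset_span ⟨_, rfl⟩
    · exact Submodule.zero_mem _
  · rw [zBL_inr_eq_tgt]
    exact Submodule.subset_span ⟨_, rfl⟩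

lemma unshift_shift (i : G ⊕ Unit) (l : G) : shiftIdx G (shiftIdx G i l) (-l) = i := by
  cases i <;> simp [shiftIdx]

open scoped Classical in
lemma inf_le_span_zBL :
    Submodule.span ℂ (Set.range (eSrc G L)) ⊓ Submodule.span ℂ (Set.range (eTgt G L)) ≤
      Submodule.span ℂ (Set.range (zBL G L)) := by
  intro x hx0
  rw [Submodule.mem_inf] at hx0
  obtain ⟨hs, ht⟩ := hx0
  rw [Submodule.mem_span_range_iff_exists_fun ℂ] at hs ht
  obtain ⟨a, ha⟩ := hs
  obtain ⟨b, hb⟩ := ht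
  have hx : ∀ (l : L) (i j : G ⊕ Unit), x l i j = if j = i then a i else 0 := by
    intro l i j
    rw [← ha]
    simp [Finset.sum_apply, Matrix.sum_apply, Pi.smul_apply, Matrix.smul_apply, eSrc_apply,
      smul_eq_mul, mul_ite, mul_one, mul_zero, ite_and, Finset.sum_ite_eq]
  have hxt : ∀ (l : L) (i j : G ⊕ Unit), x l i j =
      if j = i then b (shiftIdx G i (l : G)) else 0 := by
    intro l i j
    have key : ∀ α : G ⊕ Unit, (b α • eTgt G L α) l i j =
        if α = shiftIdx G i (l : G) then (if j = i then b α else 0) else 0 := by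
      intro α
      rw [Pi.smul_apply, Matrix.smul_apply, eTgt_apply]
      by_cases h1 : α = shiftIdx G i (l : G)
      · subst h1
        rw [unshift_shift]
        by_cases h2 : j = i <;> simp [h2]
      · have h3 : ¬ i = shiftIdx G α (-(l : G)) := by
          intro hh; apply h1; rw [hh]
          cases α <;> simp [shiftIdx]
        simp [h3, h1]
    rw [← hb]
    rw [Finset.sum_apply, Matrix.sum_apply]
    simp only [key, Finset.sum_ite_eq', Finset.mem_univ, if_pos]
  have hab : ∀ i, a i = b i := by
    intro i
    have h1 := (hx 0 i i).symm.trans (hxt 0 i i)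
    simpa [shiftIdx_zero] using h1
  have hconst : ∀ (g : G) (l : L), a (Sum.inl g) = a (Sum.inl (g - (l : G))) := by
    intro g l
    have h1 := (hx l (Sum.inl g) (Sum.inl g)).symm.trans (hxt l (Sum.inl g) (Sum.inl g))
    simp only [shiftIdx, if_true, eq_self_iff_true] at h1
    rw [h1]
    exact (hab _).symm
  have hcoset : ∀ g g' : G, (QuotientAddGroup.mk g : G ⧸ L) = QuotientAddGroup.mk g' →
      a (Sum.inl g) = a (Sum.inl g') := by
    intro g g' hgg
    have hmem : g - g' ∈ L := by rwa [QuotientAddGroup.eq_iff_sub_mem] at hgg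
    have := hconst g ⟨g - g', hmem⟩
    simpa [sub_sub_cancel] using this
  rw [Submodule.mem_span_range_iff_exists_fun ℂ]
  refine ⟨Sum.elim (fun q => a (Sum.inl q.out)) (fun _ => a (Sum.inr ())), ?_⟩
  funext l
  ext i j
  rw [Finset.sum_apply, Matrix.sum_apply, Fintype.sum_sum_type]
  rcases i with h | ⟨⟩ <;> rcases j with h' | ⟨⟩
  · simp only [Sum.elim_inl, Sum.elim_inr, Pi.smul_apply, Matrix.smul_apply, zBL_inl_apply,
      zBL_inr_eq, eSrc_apply, smul_eq_mul, mul_ite, mul_one, mul_zero, ite_and]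
    rw [hx l]
    by_cases hh : h' = h
    · simp [hh, sum_ite_push, Finset.sum_ite_eq, hcoset _ h (QuotientAddGroup.out_eq' _)]
    · simp [hh, sum_ite_push]
  · rw [hx l]; simp [zBL_inl_apply_inr_right, zBL_inr_eq, eSrc_apply]
  · rw [hx l]; simp [zBL_inl_apply_inr_left, zBL_inr_eq, eSrc_apply]
  · rw [hx l]; simp [zBL_inl_apply_inr_right, zBL_inr_eq, eSrc_apply]
lemma span_zBL_eq : Submodule.span ℂ (Set.range (zBL G L)) =
    Submodule.span ℂ (Set.range (eSrc G L)) ⊓ Submodule.span ℂ (Set.range (eTgt G L)) := by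
  apply le_antisymm
  · rw [Submodule.span_le]
    rintro _ ⟨β, rfl⟩
    exact Submodule.mem_inf.mpr ⟨zBL_mem_src G L β, zBL_mem_tgt G L β⟩
  · exact inf_le_span_zBL G L

lemma src_entry (x : BL G L) (a : G ⊕ Unit → ℂ) (ha : ∑ i : G ⊕ Unit, a i • eSrc G L i = x)
    (l : L) (i j : G ⊕ Unit) : x l i j = if j = i then a i else 0 := by
  rw [← ha]
  simp [Finset.sum_apply, Matrix.sum_apply, Pi.smul_apply, Matrix.smul_apply, eSrc_apply,
    smul_eq_mul, mul_ite, mul_one, mul_zero, ite_and, Finset.sum_ite_eq]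

lemma center_inf : Submodule.span ℂ (Set.range (eSrc G L)) ⊓
      Subalgebra.toSubmodule (Subalgebra.center ℂ (BL G L)) =
    Submodule.span ℂ {(1 : BL G L)} := by
  apply le_antisymm
  · intro x hx0
    rw [Submodule.mem_inf] at hx0
    obtain ⟨hs, hc⟩ := hx0
    rw [Submodule.mem_span_range_iff_exists_fun ℂ] at hs
    obtain ⟨a, ha⟩ := hs
    have hx := src_entry G L x a ha
    rw [Subalgebra.mem_toSubmodule] at hc
    have hcomm := Subalgebra.mem_center_iff.mp hc
    have key : ∀ α β : G ⊕ Unit, a α = a β := by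
      intro α β
      have h2 := congrFun (congrFun (congrFun (hcomm (matUnit G L 0 α β)) 0) α) β
      simp only [Pi.mul_apply, Matrix.mul_apply, matUnit_apply, hx, ite_and, mul_ite, mul_one,
        mul_zero, ite_mul, zero_mul, one_mul] at h2
      simpa [Finset.sum_ite_eq, Finset.sum_ite_eq'] using h2.symm
    rw [Submodule.mem_span_singleton]
    refine ⟨a (Sum.inr ()), ?_⟩
    rw [one_eq_sum_eSrc, Finset.smul_sum, ← ha]
    exact Finset.sum_congr rfl fun α _ => by rw [key (Sum.inr ()) α]
  · rw [Submodule.span_singleton_le_iff_mem, Submodule.mem_inf]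
    constructor
    · rw [Submodule.mem_span_range_iff_exists_fun ℂ]
      exact ⟨fun _ => 1, by simp only [one_smul]; exact (one_eq_sum_eSrc G L).symm⟩
    · rw [Subalgebra.mem_toSubmodule]
      exact Subalgebra.one_mem _

lemma inf_ne_span_one : Submodule.span ℂ (Set.range (eSrc G L)) ⊓
      Submodule.span ℂ (Set.range (eTgt G L)) ≠ Submodule.span ℂ {(1 : BL G L)} := by
  intro hEq
  have hz : zBL G L (Sum.inr ()) ∈ Submodule.span ℂ (Set.range (eSrc G L)) ⊓
      Submodule.span ℂ (Set.range (eTgt G L)) :=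
    Submodule.mem_inf.mpr ⟨zBL_mem_src G L _, zBL_mem_tgt G L _⟩
  rw [hEq, Submodule.mem_span_singleton] at hz
  obtain ⟨c, hc⟩ := hz
  have h1 := congrFun (congrFun (congrFun hc 0) (Sum.inl (0 : G))) (Sum.inl (0 : G))
  have h2 := congrFun (congrFun (congrFun hc 0) (Sum.inr ())) (Sum.inr ())
  simp only [Pi.smul_apply, Matrix.smul_apply, Pi.one_apply, Matrix.one_apply, zBL_inr_eq,
    eSrc_apply, smul_eq_mul, mul_ite, mul_one, mul_zero, if_pos rfl] at h1 h2
  simp only [reduceCtorEq, and_self, if_false, if_true] at h1 h2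
  rw [h1] at h2
  exact absurd h2 (by norm_num)
end Lemmas

theorem BL_counital_structure (G : Type) [AddCommGroup G] [Fintype G] [DecidableEq G]
    (L : AddSubgroup G) [DecidablePred (· ∈ L)] :
    -- (i) the counital maps on matrix units
    (∀ (l : L) (x y : G ⊕ Unit),
      εtBL G L (matUnit G L l x y) = if l = 0 then eTgt G L x else 0) ∧
    (∀ (l : L) (x y : G ⊕ Unit),
      εsBL G L (matUnit G L l x y) = if l = 0 then eSrc G L y else 0) ∧
    -- (ii) `{e(L)^α}` is a basis of `(B_L)_t` and `{e(L)_α}` is a basis of `(B_L)_s`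
    (LinearIndependent ℂ (eTgt G L) ∧
      Submodule.span ℂ (Set.range (eTgt G L)) = Submodule.span ℂ (Set.range (εtBL G L))) ∧
    (LinearIndependent ℂ (eSrc G L) ∧
      Submodule.span ℂ (Set.range (eSrc G L)) = Submodule.span ℂ (Set.range (εsBL G L))) ∧
    -- (iii) `{z_β : β ∈ G/L ⊔ {m}}` is a basis of `(B_L)_s ∩ (B_L)_t`
    (LinearIndependent ℂ (zBL G L) ∧
      Submodule.span ℂ (Set.range (zBL G L)) =
        Submodule.span ℂ (Set.range (εsBL G L)) ⊓ Submodule.span ℂ (Set.range (εtBL G L))) ∧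
    -- (iv) `B_L` is connected but not coconnected
    (Submodule.span ℂ (Set.range (εsBL G L)) ⊓
        Subalgebra.toSubmodule (Subalgebra.center ℂ (BL G L)) =
      Submodule.span ℂ {(1 : BL G L)}) ∧
    (Submodule.span ℂ (Set.range (εsBL G L)) ⊓ Submodule.span ℂ (Set.range (εtBL G L)) ≠
      Submodule.span ℂ {(1 : BL G L)}) := by
  refine ⟨εtBL_matUnit G L, εsBL_matUnit G L,
    ⟨eTgt_li G L, span_eTgt_eq G L⟩, ⟨eSrc_li G L, span_eSrc_eq G L⟩,
    ⟨zBL_li G L, ?_⟩, ?_, ?_⟩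
  · rw [← span_eSrc_eq, ← span_eTgt_eq]
    exact span_zBL_eq G L
  · rw [← span_eSrc_eq]
    exact center_inf G L
  · rw [← span_eSrc_eq, ← span_eTgt_eq]
    exact inf_ne_span_one G L

end
end

section
/- Let B be a weak Hopf *-algebra. Then the commutant B_t' := {b ∈ B : bz = zb for all z ∈ B_t} of B_t in B is an invariant coideal of B, and every invariant coideal of B is contained in B_t'; that is, B_t' is the greatest invariant coideal of B. -/
open scoped TensorProduct
open TensorProduct

noncomputable section

-- ===== aux =====
set_option linter.unusedSectionVars false


section TSLemmas

variable (M N : Type) [AddCommGroup M] [Module ℂ M] [Module.Finite ℂ M]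
    [Module.Free ℂ M] [StarAddMonoid M] [AddCommGroup N] [Module ℂ N] [Module.Finite ℂ N]
    [Module.Free ℂ N] [StarAddMonoid N]

theorem tensorStar_add (t t' : M ⊗[ℂ] N) :
    tensorStar M N (t + t') = tensorStar M N t + tensorStar M N t' := by
  unfold tensorStar
  simp [map_add, add_smul, Finset.sum_add_distrib]

theorem tensorStar_zero : tensorStar M N 0 = 0 := by
  unfold tensorStar; simp

theorem tensorStar_smul (c : ℂ) (t : M ⊗[ℂ] N) :
    tensorStar M N (c • t) = (starRingEnd ℂ) c • tensorStar M N t := by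
  unfold tensorStar
  simp [Finset.smul_sum, smul_smul, map_mul]

theorem star_eq_sum_basis [StarModule ℂ M] (x : M) :
    star x = ∑ i, (starRingEnd ℂ) ((Module.Free.chooseBasis ℂ M).repr x i) •
      star (Module.Free.chooseBasis ℂ M i) := by
  set bM := Module.Free.chooseBasis ℂ M
  conv_lhs => rw [← bM.sum_repr x]
  rw [star_sum]
  refine Finset.sum_congr rfl fun i _ => ?_
  rw [star_smul, starRingEnd_apply]

theorem tensorStar_tmul [StarModule ℂ M] [StarModule ℂ N] (x : M) (y : N) :
    tensorStar M N (x ⊗ₜ[ℂ] y) = star x ⊗ₜ[ℂ] star y := by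
  unfold tensorStar
  rw [Fintype.sum_prod_type]
  rw [star_eq_sum_basis M x, star_eq_sum_basis N y, sum_tmul]
  refine Finset.sum_congr rfl fun i _ => ?_
  rw [tmul_sum]
  refine Finset.sum_congr rfl fun j _ => ?_
  simp only [Module.Basis.tensorProduct_repr_tmul_apply, smul_eq_mul, map_mul,
    smul_tmul', tmul_smul, smul_smul, mul_comm]

theorem tensorStar_sum {α : Type*} (s : Finset α) (f : α → M ⊗[ℂ] N) :
    tensorStar M N (∑ a ∈ s, f a) = ∑ a ∈ s, tensorStar M N (f a) := by
  classical
  induction s using Finset.induction with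
  | empty => simp [tensorStar_zero]
  | insert _ _ h ih => rw [Finset.sum_insert h, Finset.sum_insert h, tensorStar_add, ih]

theorem tensorStar_invol [StarModule ℂ M] [StarModule ℂ N] (t : M ⊗[ℂ] N) :
    tensorStar M N (tensorStar M N t) = t := by
  induction t with
  | zero => simp [tensorStar_zero]
  | tmul x y => rw [tensorStar_tmul, tensorStar_tmul, star_star, star_star]
  | add t t' ht ht' => rw [tensorStar_add, tensorStar_add, ht, ht']

end TSLemmas

section TSMul

variable (M N : Type) [Ring M] [Algebra ℂ M] [Module.Finite ℂ M]
    [Module.Free ℂ M] [StarRing M] [StarModule ℂ M]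
    [Ring N] [Algebra ℂ N] [Module.Finite ℂ N]
    [Module.Free ℂ N] [StarRing N] [StarModule ℂ N]

theorem tensorStar_mul (t t' : M ⊗[ℂ] N) :
    tensorStar M N (t * t') = tensorStar M N t' * tensorStar M N t := by
  induction t with
  | zero => simp [tensorStar_zero]
  | tmul x y =>
    induction t' with
    | zero => simp [tensorStar_zero]
    | tmul x' y' =>
      rw [Algebra.TensorProduct.tmul_mul_tmul, tensorStar_tmul, tensorStar_tmul,
        tensorStar_tmul, Algebra.TensorProduct.tmul_mul_tmul, star_mul, star_mul]
    | add u u' hu hu' =>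
      rw [mul_add, tensorStar_add, hu, hu', tensorStar_add, add_mul]
  | add u u' hu hu' => rw [add_mul, tensorStar_add, hu, hu', tensorStar_add, mul_add]

end TSMul

namespace WHA

variable {B : Type} [NormedRing B] [StarRing B] [CStarRing B] [NormedAlgebra ℂ B]
  [StarModule ℂ B] [FiniteDimensional ℂ B]

theorem tensorStar_eq_star {M N : Type} [AddCommGroup M] [Module ℂ M] [Module.Finite ℂ M]
    [Module.Free ℂ M] [StarAddMonoid M] [StarModule ℂ M] [AddCommGroup N] [Module ℂ N]
    [Module.Finite ℂ N] [Module.Free ℂ N] [StarAddMonoid N] [StarModule ℂ N]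
    (t : M ⊗[ℂ] N) : tensorStar M N t = star t := by
  induction t with
  | zero => rw [tensorStar_zero, star_zero]
  | tmul x y => rw [tensorStar_tmul, TensorProduct.star_tmul]
  | add t t' ht ht' => rw [tensorStar_add, ht, ht', star_add]

variable (W : WHA B)

theorem star_tmul' (x y : B) : star (x ⊗ₜ[ℂ] y) = star x ⊗ₜ[ℂ] star y :=
  TensorProduct.star_tmul x y

theorem comul_star' (b : B) : W.Δ (star b) = star (W.Δ b) :=
  (W.comul_star b).trans (tensorStar_eq_star _)

theorem star_e : star (W.Δ 1) = W.Δ 1 := by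
  have h := W.comul_star 1
  rw [star_one, tensorStar_eq_star] at h
  exact h.symm

theorem e_mul_e : W.Δ 1 * W.Δ 1 = W.Δ (1 : B) := by
  rw [← W.comul_mul, one_mul]

theorem comul_mul_e (b : B) : W.Δ b * W.Δ 1 = W.Δ b := by
  rw [← W.comul_mul, mul_one]

theorem e_mul_comul (b : B) : W.Δ 1 * W.Δ b = W.Δ b := by
  rw [← W.comul_mul, one_mul]

-- star3 on (B ⊗ B) ⊗ B
theorem st3_map_comul (t : B ⊗[ℂ] B) :
    tensorStar (B ⊗[ℂ] B) B ((TensorProduct.map W.Δ LinearMap.id) t) =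
      (TensorProduct.map W.Δ LinearMap.id) (star t) := by
  induction t with
  | zero => simp [tensorStar_zero, star_zero]
  | tmul x y =>
    rw [TensorProduct.map_tmul, tensorStar_tmul, star_tmul', TensorProduct.map_tmul,
      ← W.comul_star']
    rfl
  | add t t' ht ht' =>
    rw [map_add, tensorStar_add, ht, ht', star_add, map_add]

theorem st3_assocSymm (t : B ⊗[ℂ] B) :
    tensorStar (B ⊗[ℂ] B) B ((TensorProduct.assoc ℂ B B B).symm ((1 : B) ⊗ₜ[ℂ] t)) =
      (TensorProduct.assoc ℂ B B B).symm ((1 : B) ⊗ₜ[ℂ] star t) := by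
  induction t with
  | zero =>
    rw [star_zero, tmul_zero, LinearEquiv.map_zero, tensorStar_zero]
  | tmul x y =>
    rw [TensorProduct.assoc_symm_tmul, tensorStar_tmul, star_tmul', star_one,
      star_tmul', TensorProduct.assoc_symm_tmul]
  | add t t' ht ht' =>
    rw [tmul_add, map_add, tensorStar_add, ht, ht', star_add, tmul_add, map_add]

/-- The opposite form of the comultiplication-of-unit axiom. -/
theorem comul_one_op : (TensorProduct.map W.Δ LinearMap.id) (W.Δ 1) =
    ((TensorProduct.assoc ℂ B B B).symm ((1 : B) ⊗ₜ[ℂ] W.Δ 1)) * (W.Δ 1 ⊗ₜ[ℂ] (1 : B)) := by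
  have h := congrArg (tensorStar (B ⊗[ℂ] B) B) W.weak_comul_one
  rw [st3_map_comul, star_e, tensorStar_mul, st3_assocSymm, star_e] at h
  rw [tensorStar_tmul, star_e, star_one] at h
  exact h

/-- Bundled linear version of `εt`. -/
def εtL : B →ₗ[ℂ] B :=
  (TensorProduct.lid ℂ B).toLinearMap ∘ₗ (TensorProduct.map W.ε LinearMap.id) ∘ₗ
    (LinearMap.mulLeft ℂ (W.Δ 1)) ∘ₗ ((TensorProduct.mk ℂ B B).flip 1)

theorem εtL_apply (b : B) : W.εtL b = W.εt b := rfl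

/-- Bundled linear version of `εs`. -/
def εsL : B →ₗ[ℂ] B :=
  (TensorProduct.rid ℂ B).toLinearMap ∘ₗ (TensorProduct.map LinearMap.id W.ε) ∘ₗ
    (LinearMap.mulRight ℂ (W.Δ 1)) ∘ₗ (TensorProduct.mk ℂ B B 1)

theorem εsL_apply (b : B) : W.εsL b = W.εs b := rfl

/-- right-counit contraction -/
def Rr : B ⊗[ℂ] B →ₗ[ℂ] B :=
  (TensorProduct.rid ℂ B).toLinearMap ∘ₗ (TensorProduct.map LinearMap.id W.ε)

theorem Rr_tmul (u v : B) : W.Rr (u ⊗ₜ[ℂ] v) = W.ε v • u := by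
  simp [Rr, TensorProduct.rid_tmul]

theorem Rr_comul (b : B) : W.Rr (W.Δ b) = b := W.counit_right b

/-- left-counit contraction -/
def Rl : B ⊗[ℂ] B →ₗ[ℂ] B :=
  (TensorProduct.lid ℂ B).toLinearMap ∘ₗ (TensorProduct.map W.ε LinearMap.id)

theorem Rl_tmul (u v : B) : W.Rl (u ⊗ₜ[ℂ] v) = W.ε u • v := by
  simp [Rl, TensorProduct.lid_tmul]

theorem Rl_comul (b : B) : W.Rl (W.Δ b) = b := W.counit_left b

theorem assoc_sum {α : Type*} (u : Finset α) (f : α → (B ⊗[ℂ] B) ⊗[ℂ] B) :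
    (TensorProduct.assoc ℂ B B B) (∑ a ∈ u, f a) =
      ∑ a ∈ u, (TensorProduct.assoc ℂ B B B) (f a) :=
  map_sum ((TensorProduct.assoc ℂ B B B).toLinearMap) f u

theorem assocSymm_sum {α : Type*} (u : Finset α) (f : α → B ⊗[ℂ] (B ⊗[ℂ] B)) :
    (TensorProduct.assoc ℂ B B B).symm (∑ a ∈ u, f a) =
      ∑ a ∈ u, (TensorProduct.assoc ℂ B B B).symm (f a) :=
  map_sum ((TensorProduct.assoc ℂ B B B).symm.toLinearMap) f u

section Reps

variable (s : Finset (B × B))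

theorem εt_rep (hs : W.Δ 1 = ∑ p ∈ s, p.1 ⊗ₜ[ℂ] p.2) (b : B) : W.εt b = ∑ p ∈ s, W.ε (p.1 * b) • p.2 := by
  rw [εt, hs]
  simp only [Finset.sum_mul, Algebra.TensorProduct.tmul_mul_tmul, mul_one, map_sum,
    TensorProduct.map_tmul, LinearMap.id_coe, id_eq, TensorProduct.lid_tmul]

theorem εs_rep (hs : W.Δ 1 = ∑ p ∈ s, p.1 ⊗ₜ[ℂ] p.2) (b : B) : W.εs b = ∑ p ∈ s, W.ε (b * p.2) • p.1 := by
  rw [εs, hs]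
  simp only [Finset.mul_sum, Algebra.TensorProduct.tmul_mul_tmul, one_mul, map_sum,
    TensorProduct.map_tmul, LinearMap.id_coe, id_eq, TensorProduct.rid_tmul]

theorem mdi_diag (hs : W.Δ 1 = ∑ p ∈ s, p.1 ⊗ₜ[ℂ] p.2) : (TensorProduct.map W.Δ LinearMap.id) (W.Δ 1) =
    ∑ q ∈ s, (W.Δ q.1) ⊗ₜ[ℂ] q.2 := by
  conv_lhs => rw [hs]
  simp only [map_sum, TensorProduct.map_tmul, LinearMap.id_coe, id_eq]

theorem mdi_ax (hs : W.Δ 1 = ∑ p ∈ s, p.1 ⊗ₜ[ℂ] p.2) : (TensorProduct.map W.Δ LinearMap.id) (W.Δ 1) =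
    ∑ p ∈ s, ∑ q ∈ s, (p.1 ⊗ₜ[ℂ] (p.2 * q.1)) ⊗ₜ[ℂ] q.2 := by
  rw [W.weak_comul_one]
  conv_lhs => rw [hs]
  rw [sum_tmul, tmul_sum, assocSymm_sum, Finset.sum_mul_sum]
  refine Finset.sum_congr rfl fun p _ => Finset.sum_congr rfl fun q _ => ?_
  rw [TensorProduct.assoc_symm_tmul, Algebra.TensorProduct.tmul_mul_tmul,
    Algebra.TensorProduct.tmul_mul_tmul, mul_one, one_mul]

theorem mdi_op (hs : W.Δ 1 = ∑ p ∈ s, p.1 ⊗ₜ[ℂ] p.2) : (TensorProduct.map W.Δ LinearMap.id) (W.Δ 1) =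
    ∑ p ∈ s, ∑ q ∈ s, (q.1 ⊗ₜ[ℂ] (p.1 * q.2)) ⊗ₜ[ℂ] p.2 := by
  rw [W.comul_one_op]
  conv_lhs => rw [hs]
  rw [sum_tmul, tmul_sum, assocSymm_sum, Finset.sum_mul_sum]
  refine Finset.sum_congr rfl fun p _ => Finset.sum_congr rfl fun q _ => ?_
  rw [TensorProduct.assoc_symm_tmul, Algebra.TensorProduct.tmul_mul_tmul,
    Algebra.TensorProduct.tmul_mul_tmul, mul_one, one_mul]

theorem midΔ_diag (hs : W.Δ 1 = ∑ p ∈ s, p.1 ⊗ₜ[ℂ] p.2) :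
    (TensorProduct.map LinearMap.id W.Δ) (W.Δ 1) = ∑ q ∈ s, q.1 ⊗ₜ[ℂ] (W.Δ q.2) := by
  conv_lhs => rw [hs]
  simp only [map_sum, TensorProduct.map_tmul, LinearMap.id_coe, id_eq]

theorem midΔ_ax (hs : W.Δ 1 = ∑ p ∈ s, p.1 ⊗ₜ[ℂ] p.2) :
    (TensorProduct.map LinearMap.id W.Δ) (W.Δ 1) =
      ∑ p ∈ s, ∑ q ∈ s, p.1 ⊗ₜ[ℂ] ((p.2 * q.1) ⊗ₜ[ℂ] q.2) := by
  rw [← W.coassoc 1, W.mdi_ax s hs]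
  rw [assoc_sum]
  refine Finset.sum_congr rfl fun p _ => ?_
  rw [assoc_sum]
  refine Finset.sum_congr rfl fun q _ => ?_
  rw [TensorProduct.assoc_tmul]

theorem midΔ_op (hs : W.Δ 1 = ∑ p ∈ s, p.1 ⊗ₜ[ℂ] p.2) :
    (TensorProduct.map LinearMap.id W.Δ) (W.Δ 1) =
      ∑ p ∈ s, ∑ q ∈ s, q.1 ⊗ₜ[ℂ] ((p.1 * q.2) ⊗ₜ[ℂ] p.2) := by
  rw [← W.coassoc 1, W.mdi_op s hs]
  rw [assoc_sum]
  refine Finset.sum_congr rfl fun p _ => ?_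
  rw [assoc_sum]
  refine Finset.sum_congr rfl fun q _ => ?_
  rw [TensorProduct.assoc_tmul]

end Reps

/-- F8: `(id ⊗ εt)(Δ1) = Δ1`. -/
theorem e_map_εtL : (TensorProduct.map LinearMap.id W.εtL) (W.Δ 1) = W.Δ 1 := by
  obtain ⟨s, hs⟩ := TensorProduct.exists_finset (W.Δ 1)
  have E := (W.mdi_diag s hs).symm.trans (W.mdi_op s hs)
  have E2 := congrArg (TensorProduct.map W.Rr LinearMap.id) E
  simp only [map_sum, TensorProduct.map_tmul, LinearMap.id_coe, id_eq, Rr_comul,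
    Rr_tmul, smul_tmul'] at E2
  calc (TensorProduct.map LinearMap.id W.εtL) (W.Δ 1)
      = ∑ q ∈ s, ∑ p ∈ s, (W.ε (p.1 * q.2) • q.1) ⊗ₜ[ℂ] p.2 := by
        conv_lhs => rw [hs]
        rw [map_sum]
        refine Finset.sum_congr rfl fun q _ => ?_
        rw [TensorProduct.map_tmul, εtL_apply, W.εt_rep s hs, tmul_sum]
        simp only [LinearMap.id_coe, id_eq, tmul_smul, smul_tmul']
    _ = ∑ p ∈ s, ∑ q ∈ s, (W.ε (p.1 * q.2) • q.1) ⊗ₜ[ℂ] p.2 := Finset.sum_comm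
    _ = ∑ q ∈ s, q.1 ⊗ₜ[ℂ] q.2 := E2.symm
    _ = W.Δ 1 := hs.symm

/-- F8s: `(εs ⊗ id)(Δ1) = Δ1`. -/
theorem e_map_εsL : (TensorProduct.map W.εsL LinearMap.id) (W.Δ 1) = W.Δ 1 := by
  obtain ⟨s, hs⟩ := TensorProduct.exists_finset (W.Δ 1)
  have E := (W.mdi_diag s hs).symm.trans (W.mdi_op s hs)
  have E2 := congrArg (TensorProduct.map W.Rr LinearMap.id) E
  simp only [map_sum, TensorProduct.map_tmul, LinearMap.id_coe, id_eq, Rr_comul,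
    Rr_tmul, smul_tmul'] at E2
  calc (TensorProduct.map W.εsL LinearMap.id) (W.Δ 1)
      = ∑ p ∈ s, ∑ q ∈ s, (W.ε (p.1 * q.2) • q.1) ⊗ₜ[ℂ] p.2 := by
        conv_lhs => rw [hs]
        rw [map_sum]
        refine Finset.sum_congr rfl fun p _ => ?_
        rw [TensorProduct.map_tmul, εsL_apply, W.εs_rep s hs, sum_tmul]
        simp only [LinearMap.id_coe, id_eq, smul_tmul']
    _ = ∑ q ∈ s, q.1 ⊗ₜ[ℂ] q.2 := E2.symm
    _ = W.Δ 1 := hs.symm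

/-- F6 left form: `Δ(εt c) = (εt c ⊗ 1)·Δ1`. -/
theorem comul_εt (c : B) : W.Δ (W.εt c) = (W.εt c ⊗ₜ[ℂ] (1 : B)) * W.Δ 1 := by
  obtain ⟨s, hs⟩ := TensorProduct.exists_finset (W.Δ 1)
  have E := (W.midΔ_diag s hs).symm.trans (W.midΔ_ax s hs)
  have E2 := congrArg (TensorProduct.map (W.ε ∘ₗ LinearMap.mulRight ℂ c) LinearMap.id) E
  simp only [map_sum, TensorProduct.map_tmul, LinearMap.id_coe, id_eq,
    LinearMap.coe_comp, Function.comp_apply, LinearMap.mulRight_apply] at E2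
  have E3 := congrArg (TensorProduct.lid ℂ (B ⊗[ℂ] B)) E2
  simp only [map_sum, TensorProduct.lid_tmul] at E3
  calc W.Δ (W.εt c) = ∑ q ∈ s, W.ε (q.1 * c) • W.Δ q.2 := by
        rw [W.εt_rep s hs, map_sum]
        refine Finset.sum_congr rfl fun q _ => ?_
        rw [map_smul]
    _ = ∑ p ∈ s, ∑ q ∈ s, W.ε (p.1 * c) • ((p.2 * q.1) ⊗ₜ[ℂ] q.2) := E3
    _ = (W.εt c ⊗ₜ[ℂ] (1 : B)) * W.Δ 1 := by
        conv_rhs => rw [W.εt_rep s hs, hs, sum_tmul, Finset.sum_mul]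
        refine Finset.sum_congr rfl fun p _ => ?_
        conv_rhs => rw [Finset.mul_sum]
        refine Finset.sum_congr rfl fun q _ => ?_
        rw [← smul_tmul', smul_mul_assoc, Algebra.TensorProduct.tmul_mul_tmul, one_mul]

/-- F6 right form: `Δ(εt c) = Δ1·(εt c ⊗ 1)`. -/
theorem comul_εt' (c : B) : W.Δ (W.εt c) = W.Δ 1 * (W.εt c ⊗ₜ[ℂ] (1 : B)) := by
  obtain ⟨s, hs⟩ := TensorProduct.exists_finset (W.Δ 1)
  have E := (W.midΔ_diag s hs).symm.trans (W.midΔ_op s hs)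
  have E2 := congrArg (TensorProduct.map (W.ε ∘ₗ LinearMap.mulRight ℂ c) LinearMap.id) E
  simp only [map_sum, TensorProduct.map_tmul, LinearMap.id_coe, id_eq,
    LinearMap.coe_comp, Function.comp_apply, LinearMap.mulRight_apply] at E2
  have E3 := congrArg (TensorProduct.lid ℂ (B ⊗[ℂ] B)) E2
  simp only [map_sum, TensorProduct.lid_tmul] at E3
  calc W.Δ (W.εt c) = ∑ q ∈ s, W.ε (q.1 * c) • W.Δ q.2 := by
        rw [W.εt_rep s hs, map_sum]
        refine Finset.sum_congr rfl fun q _ => ?_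
        rw [map_smul]
    _ = ∑ p ∈ s, ∑ q ∈ s, W.ε (q.1 * c) • ((p.1 * q.2) ⊗ₜ[ℂ] p.2) := E3
    _ = W.Δ 1 * (W.εt c ⊗ₜ[ℂ] (1 : B)) := by
        conv_rhs => rw [W.εt_rep s hs, hs, sum_tmul, Finset.sum_mul]
        refine Finset.sum_congr rfl fun p _ => ?_
        conv_rhs => rw [Finset.mul_sum]
        refine Finset.sum_congr rfl fun q _ => ?_
        rw [← smul_tmul', mul_smul_comm, Algebra.TensorProduct.tmul_mul_tmul, mul_one]

/-- F7: elements of the form `εt c` commute with `Δ1` in the first leg. -/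
theorem εt_comm_e (c : B) :
    (W.εt c ⊗ₜ[ℂ] (1 : B)) * W.Δ 1 = W.Δ 1 * (W.εt c ⊗ₜ[ℂ] (1 : B)) :=
  (W.comul_εt c).symm.trans (W.comul_εt' c)

/-- F6s: `Δ(εs c) = (1 ⊗ εs c)·Δ1`. -/
theorem comul_εs (c : B) : W.Δ (W.εs c) = ((1 : B) ⊗ₜ[ℂ] W.εs c) * W.Δ 1 := by
  obtain ⟨s, hs⟩ := TensorProduct.exists_finset (W.Δ 1)
  have E := (W.mdi_diag s hs).symm.trans (W.mdi_op s hs)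
  have E2 := congrArg (TensorProduct.map LinearMap.id (W.ε ∘ₗ LinearMap.mulLeft ℂ c)) E
  simp only [map_sum, TensorProduct.map_tmul, LinearMap.id_coe, id_eq,
    LinearMap.coe_comp, Function.comp_apply, LinearMap.mulLeft_apply] at E2
  have E3 := congrArg (TensorProduct.rid ℂ (B ⊗[ℂ] B)) E2
  simp only [map_sum, TensorProduct.rid_tmul] at E3
  calc W.Δ (W.εs c) = ∑ q ∈ s, W.ε (c * q.2) • W.Δ q.1 := by
        rw [W.εs_rep s hs, map_sum]
        refine Finset.sum_congr rfl fun q _ => ?_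
        rw [map_smul]
    _ = ∑ p ∈ s, ∑ q ∈ s, W.ε (c * p.2) • (q.1 ⊗ₜ[ℂ] (p.1 * q.2)) := E3
    _ = ((1 : B) ⊗ₜ[ℂ] W.εs c) * W.Δ 1 := by
        conv_rhs => rw [W.εs_rep s hs, hs, tmul_sum, Finset.sum_mul]
        refine Finset.sum_congr rfl fun p _ => ?_
        conv_rhs => rw [Finset.mul_sum]
        refine Finset.sum_congr rfl fun q _ => ?_
        rw [Algebra.TensorProduct.tmul_mul_tmul, one_mul, smul_mul_assoc, tmul_smul]

/-- K1: `(id ⊗ εt)(Δ b) = Δ1 · (b ⊗ 1)`. -/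
theorem K1 (b : B) :
    (TensorProduct.map LinearMap.id W.εtL) (W.Δ b) = W.Δ 1 * (b ⊗ₜ[ℂ] (1 : B)) := by
  obtain ⟨s, hs⟩ := TensorProduct.exists_finset (W.Δ 1)
  obtain ⟨u, hu⟩ := TensorProduct.exists_finset (W.Δ b)
  have hT : ((TensorProduct.assoc ℂ B B B).symm ((1 : B) ⊗ₜ[ℂ] W.Δ 1)) * (W.Δ b ⊗ₜ[ℂ] (1 : B)) =
      ∑ q ∈ s, (W.Δ (q.1 * b)) ⊗ₜ[ℂ] q.2 := by
    have h1 : (W.Δ b ⊗ₜ[ℂ] (1 : B)) = (W.Δ 1 ⊗ₜ[ℂ] (1 : B)) * (W.Δ b ⊗ₜ[ℂ] (1 : B)) := by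
      rw [Algebra.TensorProduct.tmul_mul_tmul, W.e_mul_comul, one_mul]
    rw [h1, ← mul_assoc, ← W.comul_one_op, W.mdi_diag s hs, Finset.sum_mul]
    refine Finset.sum_congr rfl fun q _ => ?_
    rw [Algebra.TensorProduct.tmul_mul_tmul, mul_one, ← W.comul_mul]
  have hT2 : ((TensorProduct.assoc ℂ B B B).symm ((1 : B) ⊗ₜ[ℂ] W.Δ 1)) * (W.Δ b ⊗ₜ[ℂ] (1 : B)) =
      ∑ i ∈ u, ∑ q ∈ s, (i.1 ⊗ₜ[ℂ] (q.1 * i.2)) ⊗ₜ[ℂ] q.2 := by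
    rw [hs, hu, tmul_sum, assocSymm_sum, sum_tmul, Finset.sum_mul_sum, Finset.sum_comm]
    refine Finset.sum_congr rfl fun i _ => Finset.sum_congr rfl fun q _ => ?_
    rw [TensorProduct.assoc_symm_tmul, Algebra.TensorProduct.tmul_mul_tmul,
      Algebra.TensorProduct.tmul_mul_tmul, mul_one, one_mul]
  have E := hT2.symm.trans hT
  have E2 := congrArg (TensorProduct.map W.Rr LinearMap.id) E
  simp only [map_sum, TensorProduct.map_tmul, LinearMap.id_coe, id_eq, Rr_comul,
    Rr_tmul, smul_tmul'] at E2
  calc (TensorProduct.map LinearMap.id W.εtL) (W.Δ b)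
      = ∑ i ∈ u, ∑ q ∈ s, (W.ε (q.1 * i.2) • i.1) ⊗ₜ[ℂ] q.2 := by
        conv_lhs => rw [hu]
        rw [map_sum]
        refine Finset.sum_congr rfl fun i _ => ?_
        rw [TensorProduct.map_tmul, εtL_apply, W.εt_rep s hs, tmul_sum]
        simp only [LinearMap.id_coe, id_eq, tmul_smul, smul_tmul']
    _ = ∑ q ∈ s, (q.1 * b) ⊗ₜ[ℂ] q.2 := E2
    _ = W.Δ 1 * (b ⊗ₜ[ℂ] (1 : B)) := by
        rw [hs, Finset.sum_mul]
        refine Finset.sum_congr rfl fun q _ => ?_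
        rw [Algebra.TensorProduct.tmul_mul_tmul, mul_one]

theorem comm_sum {α : Type*} (u : Finset α) (f : α → B ⊗[ℂ] B) :
    (TensorProduct.comm ℂ B B) (∑ a ∈ u, f a) = ∑ a ∈ u, (TensorProduct.comm ℂ B B) (f a) :=
  map_sum ((TensorProduct.comm ℂ B B).toLinearMap) f u

theorem Bt_eq_range : W.Bt = LinearMap.range W.εtL := by
  apply le_antisymm
  · rw [Bt]
    apply Submodule.span_le.2
    rintro _ ⟨c, rfl⟩
    exact ⟨c, rfl⟩
  · rintro _ ⟨c, rfl⟩
    exact Submodule.subset_span ⟨c, rfl⟩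

theorem mem_Bt {z : B} (hz : z ∈ W.Bt) : ∃ c, W.εt c = z := by
  rw [Bt_eq_range] at hz
  exact hz

theorem εt_mem_Bt (c : B) : W.εt c ∈ W.Bt := Submodule.subset_span ⟨c, rfl⟩

theorem εt_mu (b : B) : W.εt b = LinearMap.mul' ℂ B
    ((TensorProduct.map LinearMap.id W.S) (W.Δ b)) := (W.antipode_left b).symm

theorem εs_mu (b : B) : W.εs b = LinearMap.mul' ℂ B
    ((TensorProduct.map W.S LinearMap.id) (W.Δ b)) := (W.antipode_right b).symm

/-- key membership criterion -/
theorem mem_Bt_of_comul {w a : B} (h : W.Δ w = (a ⊗ₜ[ℂ] (1 : B)) * W.Δ 1) : w ∈ W.Bt := by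
  obtain ⟨s, hs⟩ := TensorProduct.exists_finset (W.Δ 1)
  have hrep : W.Δ 1 = ∑ q ∈ s, q.1 ⊗ₜ[ℂ] W.εt q.2 := by
    conv_lhs => rw [← W.e_map_εtL]
    conv_lhs => rw [hs]
    rw [map_sum]
    refine Finset.sum_congr rfl fun q _ => ?_
    rw [TensorProduct.map_tmul]
    simp only [LinearMap.id_coe, id_eq, εtL_apply]
  have hw : w = W.εt (∑ q ∈ s, W.ε (a * q.1) • q.2) := by
    have h0 : w = (TensorProduct.lid ℂ B) ((TensorProduct.map W.ε LinearMap.id) (W.Δ w)) :=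
      (W.counit_left w).symm
    conv_rhs => rw [← εtL_apply, map_sum]
    rw [h0, h]
    conv_lhs => rw [hrep, Finset.mul_sum, map_sum, map_sum]
    refine Finset.sum_congr rfl fun q _ => ?_
    simp only [Algebra.TensorProduct.tmul_mul_tmul, one_mul, TensorProduct.map_tmul,
      LinearMap.id_coe, id_eq, TensorProduct.lid_tmul, map_smul, εtL_apply]
  rw [hw]
  exact W.εt_mem_Bt _

theorem Bt_star {z : B} (hz : z ∈ W.Bt) : star z ∈ W.Bt := by
  obtain ⟨c, rfl⟩ := W.mem_Bt hz
  apply W.mem_Bt_of_comul (a := star (W.εt c))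
  rw [W.comul_star', W.comul_εt' c, star_mul, star_tmul', star_one, star_e]

/-- Surjectivity: every `εt c` is `S` of an element of the form `εs d`. -/
theorem εt_surj (c : B) : ∃ d, W.εt c = W.S (W.εs d) := by
  obtain ⟨s, hs⟩ := TensorProduct.exists_finset (W.Δ 1)
  have hrep : W.Δ 1 = ∑ q ∈ s, W.εs q.1 ⊗ₜ[ℂ] q.2 := by
    conv_lhs => rw [← W.e_map_εsL]
    conv_lhs => rw [hs]
    rw [map_sum]
    refine Finset.sum_congr rfl fun q _ => ?_
    rw [TensorProduct.map_tmul]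
    simp only [LinearMap.id_coe, id_eq, εsL_apply]
  have hFD : W.Δ 1 = ∑ q ∈ s, W.S q.2 ⊗ₜ[ℂ] W.S (W.εs q.1) := by
    have h := W.antipode_comul 1
    rw [W.antipode_one] at h
    calc W.Δ 1 = (TensorProduct.map W.S W.S) ((TensorProduct.comm ℂ B B) (W.Δ 1)) := h
      _ = ∑ q ∈ s, W.S q.2 ⊗ₜ[ℂ] W.S (W.εs q.1) := by
          conv_lhs => rw [hrep, comm_sum, map_sum]
          refine Finset.sum_congr rfl fun q _ => ?_
          rw [TensorProduct.comm_tmul, TensorProduct.map_tmul]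
  refine ⟨∑ q ∈ s, W.ε (W.S q.2 * c) • q.1, ?_⟩
  have hR : W.S (W.εs (∑ q ∈ s, W.ε (W.S q.2 * c) • q.1)) =
      ∑ q ∈ s, W.ε (W.S q.2 * c) • W.S (W.εs q.1) := by
    rw [← εsL_apply, map_sum, map_sum]
    refine Finset.sum_congr rfl fun q _ => ?_
    rw [map_smul, map_smul, εsL_apply]
  rw [hR, εt]
  conv_lhs => rw [hFD, Finset.sum_mul, map_sum, map_sum]
  refine Finset.sum_congr rfl fun q _ => ?_
  simp only [Algebra.TensorProduct.tmul_mul_tmul, mul_one, TensorProduct.map_tmul,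
    LinearMap.id_coe, id_eq, TensorProduct.lid_tmul]

/-- `εt(εs c · v) = εt v · S (εs c)`. -/
theorem εt_εs_mul (c v : B) : W.εt (W.εs c * v) = W.εt v * W.S (W.εs c) := by
  obtain ⟨u, hu⟩ := TensorProduct.exists_finset (W.Δ v)
  have hΔ : W.Δ (W.εs c * v) = ((1 : B) ⊗ₜ[ℂ] W.εs c) * W.Δ v := by
    rw [W.comul_mul, W.comul_εs, mul_assoc, W.e_mul_comul]
  rw [W.εt_mu, hΔ, W.εt_mu v]
  conv_lhs => rw [hu, Finset.mul_sum, map_sum, map_sum]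
  conv_rhs => rw [hu, map_sum, map_sum, Finset.sum_mul]
  refine Finset.sum_congr rfl fun i _ => ?_
  simp only [Algebra.TensorProduct.tmul_mul_tmul, one_mul, TensorProduct.map_tmul,
    LinearMap.id_coe, id_eq, LinearMap.mul'_apply, W.antipode_mul, mul_assoc]

/-- SLIDE: `Δ1 · (εs c ⊗ 1) = Δ1 · (1 ⊗ S(εs c))`. -/
theorem slide (c : B) :
    W.Δ 1 * (W.εs c ⊗ₜ[ℂ] (1 : B)) = W.Δ 1 * ((1 : B) ⊗ₜ[ℂ] W.S (W.εs c)) := by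
  obtain ⟨s, hs⟩ := TensorProduct.exists_finset (W.Δ 1)
  have h3 : (TensorProduct.map LinearMap.id W.εtL) (((1 : B) ⊗ₜ[ℂ] W.εs c) * W.Δ 1) =
      ∑ q ∈ s, q.1 ⊗ₜ[ℂ] (W.εt q.2 * W.S (W.εs c)) := by
    conv_lhs => rw [hs, Finset.mul_sum, map_sum]
    refine Finset.sum_congr rfl fun q _ => ?_
    rw [Algebra.TensorProduct.tmul_mul_tmul, one_mul, TensorProduct.map_tmul, εtL_apply,
      W.εt_εs_mul]
    simp only [LinearMap.id_coe, id_eq]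
  have h4 : (∑ q ∈ s, q.1 ⊗ₜ[ℂ] (W.εt q.2 * W.S (W.εs c))) =
      W.Δ 1 * ((1 : B) ⊗ₜ[ℂ] W.S (W.εs c)) := by
    have h5 := congrArg (TensorProduct.map LinearMap.id (LinearMap.mulRight ℂ (W.S (W.εs c))))
      W.e_map_εtL
    conv_lhs at h5 => rw [hs]
    conv_rhs at h5 => rw [hs]
    simp only [map_sum, TensorProduct.map_tmul, LinearMap.id_coe, id_eq, εtL_apply,
      LinearMap.mulRight_apply] at h5
    rw [h5, hs, Finset.sum_mul]
    refine Finset.sum_congr rfl fun q _ => ?_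
    rw [Algebra.TensorProduct.tmul_mul_tmul, mul_one]
  calc W.Δ 1 * (W.εs c ⊗ₜ[ℂ] (1 : B))
      = (TensorProduct.map LinearMap.id W.εtL) (W.Δ (W.εs c)) := (W.K1 _).symm
    _ = (TensorProduct.map LinearMap.id W.εtL) (((1 : B) ⊗ₜ[ℂ] W.εs c) * W.Δ 1) := by
        rw [W.comul_εs]
    _ = ∑ q ∈ s, q.1 ⊗ₜ[ℂ] (W.εt q.2 * W.S (W.εs c)) := h3
    _ = W.Δ 1 * ((1 : B) ⊗ₜ[ℂ] W.S (W.εs c)) := h4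

theorem mapS_mul_right_tmul (w : B) (t : B ⊗[ℂ] B) :
    (TensorProduct.map W.S LinearMap.id) (t * (w ⊗ₜ[ℂ] (1 : B))) =
      (W.S w ⊗ₜ[ℂ] (1 : B)) * (TensorProduct.map W.S LinearMap.id) t := by
  induction t with
  | zero => simp
  | tmul u v =>
    simp only [Algebra.TensorProduct.tmul_mul_tmul, mul_one, TensorProduct.map_tmul,
      LinearMap.id_coe, id_eq, W.antipode_mul, one_mul]
  | add a b ha hb => rw [add_mul, map_add, ha, hb, map_add, mul_add]

theorem mapS_mul_sec_tmul (a' : B) (t : B ⊗[ℂ] B) :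
    (TensorProduct.map W.S LinearMap.id) (t * ((1 : B) ⊗ₜ[ℂ] a')) =
      ((TensorProduct.map W.S LinearMap.id) t) * ((1 : B) ⊗ₜ[ℂ] a') := by
  induction t with
  | zero => simp
  | tmul u v =>
    simp only [Algebra.TensorProduct.tmul_mul_tmul, mul_one, TensorProduct.map_tmul,
      LinearMap.id_coe, id_eq, one_mul]
  | add a b ha hb => rw [add_mul, map_add, ha, hb, map_add, add_mul]

/-- TWe: elements of `Bt` slide across `(S ⊗ id)(Δ1)`. -/
theorem twe {z : B} (hz : z ∈ W.Bt) :
    (z ⊗ₜ[ℂ] (1 : B)) * (TensorProduct.map W.S LinearMap.id) (W.Δ 1) =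
      ((TensorProduct.map W.S LinearMap.id) (W.Δ 1)) * ((1 : B) ⊗ₜ[ℂ] z) := by
  obtain ⟨c, rfl⟩ := W.mem_Bt hz
  obtain ⟨d, hd⟩ := W.εt_surj c
  rw [hd, ← W.mapS_mul_right_tmul, W.slide d, W.mapS_mul_sec_tmul]

theorem εs_one : W.εs 1 = 1 := by
  rw [εs, ← Algebra.TensorProduct.one_def, one_mul]
  exact W.counit_right 1

theorem εt_one : W.εt 1 = 1 := by
  rw [εt, ← Algebra.TensorProduct.one_def, mul_one]
  exact W.counit_left 1

theorem e_rep_εt (s : Finset (B × B)) (hs : W.Δ 1 = ∑ p ∈ s, p.1 ⊗ₜ[ℂ] p.2) :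
    W.Δ 1 = ∑ q ∈ s, q.1 ⊗ₜ[ℂ] W.εt q.2 := by
  conv_lhs => rw [← W.e_map_εtL]
  conv_lhs => rw [hs]
  rw [map_sum]
  refine Finset.sum_congr rfl fun q _ => ?_
  rw [TensorProduct.map_tmul]
  simp only [LinearMap.id_coe, id_eq, εtL_apply]

/-- `wrap a t = Σ u·a·v` for `t = Σ u ⊗ v`. -/
def wrap (a : B) : B ⊗[ℂ] B →ₗ[ℂ] B :=
  LinearMap.mul' ℂ B ∘ₗ TensorProduct.map LinearMap.id (LinearMap.mulLeft ℂ a)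

theorem wrap_tmul (a u v : B) : wrap a (u ⊗ₜ[ℂ] v) = u * (a * v) := by
  simp [wrap]

theorem wrap_left (a z : B) (t : B ⊗[ℂ] B) :
    z * wrap a t = wrap a ((z ⊗ₜ[ℂ] (1 : B)) * t) := by
  induction t with
  | zero => simp
  | tmul u v =>
    rw [wrap_tmul, Algebra.TensorProduct.tmul_mul_tmul, one_mul, wrap_tmul, mul_assoc]
  | add r r' hr hr' => rw [map_add, mul_add, hr, hr', mul_add, map_add]

theorem wrap_right (a z : B) (t : B ⊗[ℂ] B) :
    wrap a t * z = wrap a (t * ((1 : B) ⊗ₜ[ℂ] z)) := by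
  induction t with
  | zero => simp
  | tmul u v =>
    rw [wrap_tmul, Algebra.TensorProduct.tmul_mul_tmul, mul_one, wrap_tmul, mul_assoc,
      mul_assoc]
  | add r r' hr hr' => rw [map_add, add_mul, hr, hr', add_mul, map_add]

/-- REP: the adjoint action is fixed by the `Q`-sandwich. -/
theorem ad_rep (b x : B) :
    W.ad b x = wrap (W.ad b x) ((TensorProduct.map W.S LinearMap.id) (W.Δ 1)) := by
  obtain ⟨s, hs⟩ := TensorProduct.exists_finset (W.Δ 1)
  obtain ⟨u, hu⟩ := TensorProduct.exists_finset (W.Δ x)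
  have ha : W.ad b x = ∑ i ∈ u, W.S i.1 * (b * i.2) := by
    rw [ad]
    conv_lhs => rw [hu, map_sum, map_sum]
    refine Finset.sum_congr rfl fun i _ => ?_
    rw [TensorProduct.map_tmul, LinearMap.mul'_apply, LinearMap.mulLeft_apply]
  calc W.ad b x
      = LinearMap.mul' ℂ B ((TensorProduct.map W.S (LinearMap.mulLeft ℂ b))
          (W.Δ x * W.Δ 1)) := by rw [W.comul_mul_e, ad]
    _ = ∑ i ∈ u, ∑ q ∈ s, (W.S q.1 * W.S i.1) * (b * (i.2 * q.2)) := by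
        conv_lhs => rw [hu, hs, Finset.sum_mul_sum, map_sum, map_sum]
        refine Finset.sum_congr rfl fun i _ => ?_
        conv_lhs => rw [map_sum, map_sum]
        refine Finset.sum_congr rfl fun q _ => ?_
        rw [Algebra.TensorProduct.tmul_mul_tmul, TensorProduct.map_tmul,
          LinearMap.mul'_apply, LinearMap.mulLeft_apply, W.antipode_mul]
    _ = wrap (W.ad b x) ((TensorProduct.map W.S LinearMap.id) (W.Δ 1)) := by
        rw [ha]
        conv_rhs => rw [hs, map_sum, map_sum]
        rw [Finset.sum_comm]
        refine Finset.sum_congr rfl fun q _ => ?_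
        rw [TensorProduct.map_tmul]
        simp only [LinearMap.id_coe, id_eq, wrap_tmul, Finset.sum_mul, Finset.mul_sum]
        refine Finset.sum_congr rfl fun i _ => ?_
        simp only [mul_assoc]

/-- L1: the image of the adjoint action commutes with `Bt`. -/
theorem ad_comm {z : B} (hz : z ∈ W.Bt) (b x : B) : z * W.ad b x = W.ad b x * z := by
  have h := W.ad_rep b x
  calc z * W.ad b x
      = z * wrap (W.ad b x) ((TensorProduct.map W.S LinearMap.id) (W.Δ 1)) := by rw [← h]
    _ = wrap (W.ad b x) ((z ⊗ₜ[ℂ] (1 : B)) *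
        (TensorProduct.map W.S LinearMap.id) (W.Δ 1)) := wrap_left _ _ _
    _ = wrap (W.ad b x) (((TensorProduct.map W.S LinearMap.id) (W.Δ 1)) *
        ((1 : B) ⊗ₜ[ℂ] z)) := by rw [W.twe hz]
    _ = wrap (W.ad b x) ((TensorProduct.map W.S LinearMap.id) (W.Δ 1)) * z :=
        (wrap_right _ _ _).symm
    _ = W.ad b x * z := by rw [← h]

/-- commutation of `Δ b` with `z ⊗ 1` for `b` in the commutant of `Bt`. -/
theorem comul_comm_of_comm {b : B} (hb : ∀ z ∈ W.Bt, b * z = z * b) {z : B}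
    (hz : z ∈ W.Bt) :
    (z ⊗ₜ[ℂ] (1 : B)) * W.Δ b = W.Δ b * (z ⊗ₜ[ℂ] (1 : B)) := by
  obtain ⟨c, rfl⟩ := W.mem_Bt hz
  calc (W.εt c ⊗ₜ[ℂ] (1 : B)) * W.Δ b
      = ((W.εt c ⊗ₜ[ℂ] (1 : B)) * W.Δ 1) * W.Δ b := by rw [mul_assoc, W.e_mul_comul]
    _ = W.Δ (W.εt c) * W.Δ b := by rw [← W.comul_εt]
    _ = W.Δ (W.εt c * b) := by rw [← W.comul_mul]
    _ = W.Δ (b * W.εt c) := by rw [hb _ (W.εt_mem_Bt c)]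
    _ = W.Δ b * W.Δ (W.εt c) := W.comul_mul _ _
    _ = W.Δ b * (W.Δ 1 * (W.εt c ⊗ₜ[ℂ] (1 : B))) := by rw [← W.comul_εt']
    _ = (W.Δ b * W.Δ 1) * (W.εt c ⊗ₜ[ℂ] (1 : B)) := by rw [mul_assoc]
    _ = W.Δ b * (W.εt c ⊗ₜ[ℂ] (1 : B)) := by rw [W.comul_mul_e]

theorem ad_one_eq {b : B} (hb : ∀ z ∈ W.Bt, b * z = z * b) : W.ad b 1 = b := by
  obtain ⟨s, hs⟩ := TensorProduct.exists_finset (W.Δ 1)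
  have hrep := W.e_rep_εt s hs
  have h1 : W.ad b 1 = ∑ q ∈ s, W.S q.1 * (b * W.εt q.2) := by
    rw [ad]
    conv_lhs => rw [hrep, map_sum, map_sum]
    refine Finset.sum_congr rfl fun q _ => ?_
    rw [TensorProduct.map_tmul, LinearMap.mul'_apply, LinearMap.mulLeft_apply]
  have h2 : (∑ q ∈ s, W.S q.1 * W.εt q.2) = 1 := by
    have h3 : W.εs 1 = ∑ q ∈ s, W.S q.1 * W.εt q.2 := by
      rw [W.εs_mu 1]
      conv_lhs => rw [hrep, map_sum, map_sum]
      refine Finset.sum_congr rfl fun q _ => ?_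
      rw [TensorProduct.map_tmul, LinearMap.mul'_apply]
      simp only [LinearMap.id_coe, id_eq]
    rw [← h3, W.εs_one]
  calc W.ad b 1 = ∑ q ∈ s, W.S q.1 * (b * W.εt q.2) := h1
    _ = ∑ q ∈ s, (W.S q.1 * W.εt q.2) * b := by
        refine Finset.sum_congr rfl fun q _ => ?_
        rw [hb _ (W.εt_mem_Bt q.2), mul_assoc]
    _ = (∑ q ∈ s, W.S q.1 * W.εt q.2) * b := by rw [Finset.sum_mul]
    _ = b := by rw [h2, one_mul]

/-- coordinate extraction on the second tensor factor -/
def coordMap (j : Module.Free.ChooseBasisIndex ℂ B) : B ⊗[ℂ] B →ₗ[ℂ] B :=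
  (TensorProduct.rid ℂ B).toLinearMap ∘ₗ
    TensorProduct.map LinearMap.id ((Module.Free.chooseBasis ℂ B).coord j)

theorem coordMap_tmul (j : Module.Free.ChooseBasisIndex ℂ B) (u v : B) :
    coordMap j (u ⊗ₜ[ℂ] v) = (Module.Free.chooseBasis ℂ B).repr v j • u := by
  simp [coordMap, Module.Basis.coord_apply, TensorProduct.rid_tmul]

theorem coordMap_expand (t : B ⊗[ℂ] B) :
    t = ∑ j, coordMap j t ⊗ₜ[ℂ] (Module.Free.chooseBasis ℂ B j) := by
  induction t with
  | zero => simp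
  | tmul u v =>
    calc u ⊗ₜ[ℂ] v
        = u ⊗ₜ[ℂ] (∑ j, (Module.Free.chooseBasis ℂ B).repr v j •
            (Module.Free.chooseBasis ℂ B j)) := by
          rw [(Module.Free.chooseBasis ℂ B).sum_repr v]
      _ = ∑ j, u ⊗ₜ[ℂ] ((Module.Free.chooseBasis ℂ B).repr v j •
            (Module.Free.chooseBasis ℂ B j)) := tmul_sum _ _ _
      _ = ∑ j, coordMap j (u ⊗ₜ[ℂ] v) ⊗ₜ[ℂ] (Module.Free.chooseBasis ℂ B j) := by
          refine Finset.sum_congr rfl fun j _ => ?_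
          rw [coordMap_tmul, ← smul_tmul]
  | add r r' hr hr' =>
    calc r + r'
        = (∑ j, coordMap j r ⊗ₜ[ℂ] (Module.Free.chooseBasis ℂ B j)) +
          (∑ j, coordMap j r' ⊗ₜ[ℂ] (Module.Free.chooseBasis ℂ B j)) := by
          rw [← hr, ← hr']
      _ = ∑ j, (coordMap j r ⊗ₜ[ℂ] (Module.Free.chooseBasis ℂ B j) +
          coordMap j r' ⊗ₜ[ℂ] (Module.Free.chooseBasis ℂ B j)) :=
          Finset.sum_add_distrib.symm
      _ = ∑ j, coordMap j (r + r') ⊗ₜ[ℂ] (Module.Free.chooseBasis ℂ B j) := by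
          refine Finset.sum_congr rfl fun j _ => ?_
          rw [map_add, add_tmul]

theorem coordMap_mul_left (j : Module.Free.ChooseBasisIndex ℂ B) (z : B) (t : B ⊗[ℂ] B) :
    coordMap j ((z ⊗ₜ[ℂ] (1 : B)) * t) = z * coordMap j t := by
  induction t with
  | zero => simp
  | tmul u v =>
    rw [Algebra.TensorProduct.tmul_mul_tmul, one_mul, coordMap_tmul, coordMap_tmul,
      mul_smul_comm]
  | add r r' hr hr' => rw [mul_add, map_add, hr, hr', map_add, mul_add]

theorem coordMap_mul_right (j : Module.Free.ChooseBasisIndex ℂ B) (z : B) (t : B ⊗[ℂ] B) :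
    coordMap j (t * (z ⊗ₜ[ℂ] (1 : B))) = coordMap j t * z := by
  induction t with
  | zero => simp
  | tmul u v =>
    rw [Algebra.TensorProduct.tmul_mul_tmul, mul_one, coordMap_tmul, coordMap_tmul,
      smul_mul_assoc]
  | add r r' hr hr' => rw [add_mul, map_add, hr, hr', map_add, add_mul]

end WHA

/-- the commutant of `B_t` is an invariant coideal, and it is the greatest one. -/
theorem commutant_Bt_greatest_invariant_coideal {B : Type} [NormedRing B] [StarRing B]
    [CStarRing B] [NormedAlgebra ℂ B] [StarModule ℂ B] [FiniteDimensional ℂ B] (W : WHA B) :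
    (∃ I : Submodule ℂ B, (I : Set B) = {b : B | ∀ z ∈ W.Bt, b * z = z * b} ∧
      W.IsCoideal I ∧ W.IsInvariant I) ∧
    ∀ J : Submodule ℂ B, W.IsCoideal J → W.IsInvariant J →
      (J : Set B) ⊆ {b : B | ∀ z ∈ W.Bt, b * z = z * b} := by
  classical
  let C : Submodule ℂ B :=
    { carrier := {b : B | ∀ z ∈ W.Bt, b * z = z * b}
      add_mem' := fun {a b} ha hb z hz => by rw [add_mul, mul_add, ha z hz, hb z hz]
      zero_mem' := fun z hz => by rw [zero_mul, mul_zero]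
      smul_mem' := fun c {b} hb z hz => by rw [smul_mul_assoc, mul_smul_comm, hb z hz] }
  constructor
  · refine ⟨C, rfl, ⟨?_, ?_, ?_, ?_⟩, ?_⟩
    · intro z hz
      rw [one_mul, mul_one]
    · intro a ha b hb z hz
      rw [mul_assoc, hb z hz, ← mul_assoc, ha z hz, mul_assoc]
    · intro a ha z hz
      have h1 := W.Bt_star hz
      calc star a * z = star (star z * a) := by rw [star_mul, star_star]
        _ = star (a * star z) := by rw [← ha _ h1]
        _ = z * star a := by rw [star_mul, star_star]
    · intro a ha
      have hcomm : ∀ z ∈ W.Bt, (z ⊗ₜ[ℂ] (1 : B)) * W.Δ a = W.Δ a * (z ⊗ₜ[ℂ] (1 : B)) :=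
        fun z hz => W.comul_comm_of_comm ha hz
      rw [WHA.coordMap_expand (W.Δ a)]
      refine Submodule.sum_mem _ fun j _ => Submodule.subset_span ?_
      refine ⟨WHA.coordMap j (W.Δ a), ?_, Module.Free.chooseBasis ℂ B j, rfl⟩
      intro z hz
      calc WHA.coordMap j (W.Δ a) * z
          = WHA.coordMap j (W.Δ a * (z ⊗ₜ[ℂ] (1 : B))) := (WHA.coordMap_mul_right _ _ _).symm
        _ = WHA.coordMap j ((z ⊗ₜ[ℂ] (1 : B)) * W.Δ a) := by rw [← hcomm z hz]
        _ = z * WHA.coordMap j (W.Δ a) := WHA.coordMap_mul_left _ _ _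
    · apply le_antisymm
      · refine Submodule.span_le.2 ?_
        rintro _ ⟨b, hb, x, rfl⟩
        intro z hz
        exact (W.ad_comm hz b x).symm
      · intro b hb
        exact Submodule.subset_span ⟨b, hb, 1, (W.ad_one_eq hb).symm⟩
  · intro J _ hJinv b hb
    rw [← hJinv] at hb
    have hle : Submodule.span ℂ {y : B | ∃ b ∈ J, ∃ x : B, y = W.ad b x} ≤ C := by
      refine Submodule.span_le.2 ?_
      rintro _ ⟨b', _, x, rfl⟩
      intro z hz
      exact (W.ad_comm hz b' x).symm
    exact hle hb

end
end
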